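/- arXiv:1105.3712 — 9 statements merged into one kernel-verified Lean document; each statement's English description precedes it below -/
import Mathlib

section
/- For every finite simple graph H on n vertices with m' non-adjacent (unordered) pairs of distinct vertices (non-edges), there exists a finite simple graph G on n + m' vertices such that every proper vertex coloring of G contains a rainbow induced subgraph isomorphic to H; consequently ρ(H) ≤ n + m'. -/
/-- `ArrowsR G H` (written `G →r H`) means: every proper vertex coloring of `G`
contains a rainbow induced subgraph isomorphic to `H`, i.e. an induced copy of `H`
(a graph embedding) whose vertices receive pairwise distinct colors. -/
def ArrowsR {α β : Type} (G : SimpleGraph α) (H : SimpleGraph β) : Prop :=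
  ∀ c : α → ℕ, (∀ u v : α, G.Adj u v → c u ≠ c v) →
    ∃ f : H ↪g G, Function.Injective fun h => c (f h)

/-- `rho H` is the minimum number of vertices of a graph `G` with `G →r H`. -/
noncomputable def rho {β : Type} (H : SimpleGraph β) : ℕ :=
  sInf {m : ℕ | ∃ G : SimpleGraph (Fin m), ArrowsR G H}

open Finset

section Aux
variable {V : Type} [Fintype V] [DecidableEq V] (H : SimpleGraph V) [DecidableRel H.Adj]
  (r : V → ℕ)

def kk (v : V) : ℕ := 1 + #(univ.filter fun w => r w < r v ∧ ¬H.Adj v w)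

def GG : SimpleGraph (Σ v : V, Fin (kk H r v)) where
  Adj x y := x ≠ y ∧ (x.1 = y.1 ∨ H.Adj x.1 y.1)
  symm := ⟨by
    rintro x y ⟨h1, h2⟩
    exact ⟨h1.symm, h2.imp Eq.symm H.adj_symm⟩⟩
  loopless := ⟨fun x h => h.1 rfl⟩

set_option linter.unusedSectionVars false in
lemma GG_clique {v : V} {a b : Fin (kk H r v)} (hab : a ≠ b) :
    (GG H r).Adj ⟨v, a⟩ ⟨v, b⟩ := by
  refine ⟨fun h => hab ?_, Or.inl rfl⟩
  · have := (Sigma.mk.inj_iff.mp h).2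
    exact eq_of_heq this

lemma arrows (hr : Function.Injective r) : ArrowsR (GG H r) H := by
  intro c hc
  set_option linter.unusedVariables false in
  have key : ∀ i : ℕ, ∃ rep : ∀ v, Fin (kk H r v),
      ∀ v w, r v < i → r w < r v → ¬H.Adj v w → c ⟨v, rep v⟩ ≠ c ⟨w, rep w⟩ := by
    intro i
    induction i with
    | zero => exact ⟨fun v => ⟨0, by unfold kk; omega⟩, fun v w hv => by omega⟩
    | succ i ih =>
      obtain ⟨rep, hrep⟩ := ih
      by_cases hex : ∃ v₀ : V, r v₀ = i
      · obtain ⟨v₀, hv₀⟩ := hex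
        set S : Finset V := univ.filter fun w => r w < r v₀ ∧ ¬H.Adj v₀ w with hS
        have hinj : Function.Injective fun a : Fin (kk H r v₀) => c ⟨v₀, a⟩ := by
          intro a b hab
          by_contra hne
          exact hc _ _ (GG_clique H r hne) hab
        have hcard : (S.image fun w => c ⟨w, rep w⟩).card <
            ((univ : Finset (Fin (kk H r v₀))).image fun a => c ⟨v₀, a⟩).card := by
          have h1 : (S.image fun w => c ⟨w, rep w⟩).card ≤ S.card := Finset.card_image_le
          have h2 : ((univ : Finset (Fin (kk H r v₀))).image fun a => c ⟨v₀, a⟩).card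
              = kk H r v₀ := by
            rw [Finset.card_image_of_injective _ hinj, Finset.card_univ, Fintype.card_fin]
          have h3 : kk H r v₀ = 1 + S.card := rfl
          omega
        have hns : ¬ ((univ : Finset (Fin (kk H r v₀))).image fun a => c ⟨v₀, a⟩) ⊆
            (S.image fun w => c ⟨w, rep w⟩) :=
          fun hsub => absurd (Finset.card_le_card hsub) (not_le.mpr hcard)
        obtain ⟨t, ht, hts⟩ := Finset.not_subset.mp hns
        obtain ⟨a, -, rfl⟩ := Finset.mem_image.mp ht
        refine ⟨Function.update rep v₀ a, ?_⟩
        intro v w hv hw hadj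
        have hwv : w ≠ v₀ := fun h => by subst h; omega
        rw [Function.update_of_ne hwv]
        rcases Nat.lt_succ_iff_lt_or_eq.mp hv with h | h
        · have hvv : v ≠ v₀ := fun hh => by subst hh; omega
          rw [Function.update_of_ne hvv]
          exact hrep v w h hw hadj
        · have hvv : v = v₀ := hr (h.trans hv₀.symm)
          subst hvv
          rw [Function.update_self]
          intro hcon
          exact hts (Finset.mem_image.mpr ⟨w,
            Finset.mem_filter.mpr ⟨mem_univ w, hw, hadj⟩, hcon.symm⟩)
      · refine ⟨rep, fun v w hv hw hadj => ?_⟩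
        have hvi : r v ≠ i := fun h => hex ⟨v, h⟩
        exact hrep v w (by omega) hw hadj
  obtain ⟨rep, hrep⟩ := key ((univ : Finset V).sup r + 1)
  have hbound : ∀ v : V, r v < (univ : Finset V).sup r + 1 :=
    fun v => Nat.lt_succ_of_le (Finset.le_sup (mem_univ v))
  refine ⟨⟨⟨fun v => ⟨v, rep v⟩, fun u v h => congrArg Sigma.fst h⟩, ?_⟩, ?_⟩
  · intro u v
    constructor
    · rintro ⟨hne, h | h⟩
      · exact absurd (by subst h; rfl) hne
      · exact h
    · intro h
      exact ⟨fun heq => H.ne_of_adj h (congrArg Sigma.fst heq), Or.inr h⟩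
  · intro u v huv
    simp only [Function.Embedding.coeFn_mk] at huv
    by_contra hne
    by_cases hadj : H.Adj u v
    · exact hc _ _ ⟨fun heq => hne (congrArg Sigma.fst heq), Or.inr hadj⟩ huv
    · rcases lt_trichotomy (r u) (r v) with h | h | h
      · exact hrep v u (hbound v) h (fun hh => hadj hh.symm) huv.symm
      · exact hne (hr h)
      · exact hrep u v (hbound u) h hadj huv

lemma card_GG (hr : Function.Injective r) :
    Fintype.card (Σ v : V, Fin (kk H r v)) = Fintype.card V + Hᶜ.edgeFinset.card := by
  classical
  rw [Fintype.card_sigma]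
  have hsum : ∑ v : V, Fintype.card (Fin (kk H r v))
      = Fintype.card V + ∑ v : V, #(univ.filter fun w => r w < r v ∧ ¬H.Adj v w) := by
    simp only [Fintype.card_fin]; simp only [kk]
    rw [Finset.sum_add_distrib, Finset.sum_const, Finset.card_univ, smul_eq_mul, mul_one]
  rw [hsum]
  congr 1
  -- count non-edges
  have h2 : 2 * #Hᶜ.edgeFinset = #(univ.filter fun (x, y) => Hᶜ.Adj x y) :=
    SimpleGraph.two_mul_card_edgeFinset _
  set A : Finset (V × V) := univ.filter fun p => Hᶜ.Adj p.1 p.2 with hA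
  have hsplit : #A = #(A.filter fun p => r p.2 < r p.1) + #(A.filter fun p => ¬ r p.2 < r p.1) :=
    (Finset.card_filter_add_card_filter_not _).symm
  have heq1 : #(A.filter fun p => r p.2 < r p.1)
      = ∑ v : V, #(univ.filter fun w => r w < r v ∧ ¬H.Adj v w) := by
    rw [hA, Finset.filter_filter]
    rw [← Finset.univ_product_univ]
    rw [Finset.card_filter, Finset.sum_product, ]
    simp only [Finset.card_filter]
    refine Finset.sum_congr rfl fun v _ => Finset.sum_congr rfl fun w _ => ?_
    congr 1
    simp only [SimpleGraph.compl_adj, eq_iff_iff]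
    constructor
    · rintro ⟨⟨hne, hnadj⟩, hlt⟩; exact ⟨hlt, hnadj⟩
    · rintro ⟨hlt, hnadj⟩
      exact ⟨⟨fun h => by subst h; omega, hnadj⟩, hlt⟩
  have heq2 : #(A.filter fun p => ¬ r p.2 < r p.1) = #(A.filter fun p => r p.2 < r p.1) := by
    apply Finset.card_bij (fun p _ => Prod.swap p)
    · rintro ⟨u, v⟩ hp
      simp only [hA, Finset.mem_filter, Finset.mem_univ, true_and] at hp ⊢
      obtain ⟨hadj, hlt⟩ := hp
      refine ⟨hadj.symm, ?_⟩
      have hne : u ≠ v := hadj.ne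
      have : r u ≠ r v := fun h => hne (hr h)
      simp only [Prod.swap]
      omega
    · rintro ⟨u, v⟩ - ⟨u', v'⟩ - h
      exact Prod.swap_injective h
    · rintro ⟨u, v⟩ hp
      refine ⟨(v, u), ?_, rfl⟩
      simp only [hA, Finset.mem_filter, Finset.mem_univ, true_and] at hp ⊢
      exact ⟨hp.1.symm, by omega⟩
  omega


end Aux

/-- If `H` has `n` vertices and `m'` non-edges, then some graph on `n + m'` vertices
arrows `H`, and consequently `rho H ≤ n + m'`. -/
theorem stmt0 {V : Type} [Fintype V] [DecidableEq V]
    (H : SimpleGraph V) [DecidableRel H.Adj] (n m' : ℕ)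
    (hn : n = Fintype.card V) (hm : m' = Hᶜ.edgeFinset.card) :
    (∃ G : SimpleGraph (Fin (n + m')), ArrowsR G H) ∧ rho H ≤ n + m' := by
  subst hn hm
  set r : V → ℕ := fun v => ((Fintype.equivFin V) v : ℕ) with hrdef
  have hr : Function.Injective r := fun u v h => (Fintype.equivFin V).injective (Fin.val_injective h)
  have hcard : Fintype.card (Σ v : V, Fin (kk H r v))
      = Fintype.card V + Hᶜ.edgeFinset.card := card_GG H r hr
  set eqv := Fintype.equivFinOfCardEq hcard with heqv
  set G : SimpleGraph (Fin (Fintype.card V + Hᶜ.edgeFinset.card)) :=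
    SimpleGraph.comap (⇑eqv.symm) (GG H r) with hG
  have harr : ArrowsR G H := by
    intro c hc
    have hcp : ∀ u v, (GG H r).Adj u v → (c ∘ eqv) u ≠ (c ∘ eqv) v := by
      intro u v hadj
      apply hc
      simp only [hG, SimpleGraph.comap_adj, Equiv.symm_apply_apply]
      exact hadj
    obtain ⟨f, hf⟩ := arrows H r hr (c ∘ eqv) hcp
    refine ⟨⟨⟨fun v => eqv (f v), fun u v h => f.injective (eqv.injective h)⟩, ?_⟩, hf⟩
    intro u v
    simp only [Function.Embedding.coeFn_mk, hG, SimpleGraph.comap_adj, Equiv.symm_apply_apply]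
    change (GG H r).Adj (eqv.symm (eqv (f u))) (eqv.symm (eqv (f v))) ↔ H.Adj u v
    rw [Equiv.symm_apply_apply, Equiv.symm_apply_apply]
    exact f.map_rel_iff
  exact ⟨⟨G, harr⟩, Nat.sInf_le ⟨G, harr⟩⟩
end

section
/- Let H be a finite simple graph on n vertices with chromatic number χ, and let k = ⌈n/χ⌉. Then every graph G with G →r H satisfies |V(G)| ≥ k·n − χ·k·(k−1)/2; consequently ρ(H) ≥ k(n − χ(k−1)/2). -/
section Peel
variable {W : Type} [Fintype W] [DecidableEq W] (G : SimpleGraph W)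

/-- `RIndep G s` : `s` is an independent set of `G`. -/
def RIndep (s : Finset W) : Prop := ∀ u ∈ s, ∀ v ∈ s, ¬ G.Adj u v

set_option linter.unusedSectionVars false in
lemma exists_maxInd (B : Finset W) :
    ∃ M, M ⊆ B ∧ RIndep G M ∧ ∀ s ⊆ B, RIndep G s → s.card ≤ M.card := by
  classical
  have hne : (B.powerset.filter (fun s => RIndep G s)).Nonempty := by
    refine ⟨∅, ?_⟩
    exact Finset.mem_filter.mpr ⟨Finset.empty_mem_powerset _, by simp [RIndep]⟩
  obtain ⟨M, hM, hmax⟩ := Finset.exists_max_image _ Finset.card hne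
  simp only [Finset.mem_filter, Finset.mem_powerset] at hM
  refine ⟨M, hM.1, hM.2, fun s hs hind => ?_⟩
  exact hmax s (by simp [Finset.mem_filter, Finset.mem_powerset, hs, hind])

noncomputable def maxInd (B : Finset W) : Finset W := (exists_maxInd G B).choose

lemma maxInd_subset (B : Finset W) : maxInd G B ⊆ B := (exists_maxInd G B).choose_spec.1
lemma maxInd_indep (B : Finset W) : RIndep G (maxInd G B) := (exists_maxInd G B).choose_spec.2.1
lemma maxInd_max (B : Finset W) {s : Finset W} (hs : s ⊆ B) (h : RIndep G s) :
    s.card ≤ (maxInd G B).card := (exists_maxInd G B).choose_spec.2.2 s hs h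

noncomputable def peel : ℕ → Finset W
  | 0 => Finset.univ
  | (i+1) => peel i \ maxInd G (peel i)

lemma peel_anti : ∀ {i j : ℕ}, i ≤ j → peel G j ⊆ peel G i := by
  intro i j h
  induction j with
  | zero => simp_all
  | succ j ih =>
    rcases Nat.lt_or_ge i (j+1) with h' | h'
    · exact (Finset.sdiff_subset).trans (ih (Nat.lt_succ_iff.mp h'))
    · have : i = j + 1 := le_antisymm h h'
      subst this; exact subset_rfl

lemma peel_card (i : ℕ) : (peel G i).Nonempty → (peel G i).card + i ≤ Fintype.card W := by
  induction i with
  | zero => intro _; simp [peel]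
  | succ i ih =>
    intro hne
    have hsub : peel G (i+1) ⊆ peel G i := Finset.sdiff_subset
    have hnei : (peel G i).Nonempty := hne.mono hsub
    obtain ⟨x, hx⟩ := hnei.exists_mem
    have hM1 : 1 ≤ (maxInd G (peel G i)).card := by
      have : ({x} : Finset W).card ≤ (maxInd G (peel G i)).card := by
        refine maxInd_max G _ (by simpa using hx) ?_
        intro u hu v hv
        simp only [Finset.mem_singleton] at hu hv
        subst hu; subst hv; exact G.loopless.irrefl _
      simpa using this
    have hcs : (peel G (i+1)).card = (peel G i).card - (maxInd G (peel G i)).card := by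
      simp [peel, Finset.card_sdiff_of_subset (maxInd_subset G (peel G i))]
    have := ih hnei
    have hle : (maxInd G (peel G i)).card ≤ (peel G i).card :=
      Finset.card_le_card (maxInd_subset G (peel G i))
    omega

lemma peel_exists (v : W) : ∃ i, v ∉ peel G (i+1) := by
  refine ⟨Fintype.card W, fun hv => ?_⟩
  have := peel_card G (Fintype.card W + 1) ⟨v, hv⟩
  have h1 : 1 ≤ (peel G (Fintype.card W + 1)).card := Finset.card_pos.mpr ⟨v, hv⟩
  omega

noncomputable def pcol (v : W) : ℕ := Nat.find (peel_exists G v)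

lemma mem_peel_of_le {v : W} {i : ℕ} (h : i ≤ pcol G v) : v ∈ peel G i := by
  rcases i with _ | j
  · simp [peel]
  · have := Nat.find_min (peel_exists G v) (Nat.lt_of_lt_of_le (Nat.lt_of_succ_le h) (le_refl _))
    exact not_not.mp this

lemma pcol_mem_maxInd (v : W) : v ∈ maxInd G (peel G (pcol G v)) := by
  have h1 : v ∈ peel G (pcol G v) := mem_peel_of_le G le_rfl
  have h2 : v ∉ peel G (pcol G v + 1) := Nat.find_spec (peel_exists G v)
  by_contra h
  exact h2 (by simp [peel, Finset.mem_sdiff, h1, h])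

lemma pcol_proper {u v : W} (h : G.Adj u v) : pcol G u ≠ pcol G v := by
  intro he
  have hu := pcol_mem_maxInd G u
  have hv := pcol_mem_maxInd G v
  rw [he] at hu
  exact maxInd_indep G (peel G (pcol G v)) u hu v hv h

/-- The color classes (as subsets of the max independent sets) are disjoint. -/
lemma maxInd_peel_disjoint {i j : ℕ} (h : i ≠ j) :
    Disjoint (maxInd G (peel G i)) (maxInd G (peel G j)) := by
  wlog hij : i < j generalizing i j
  · exact (this h.symm (by omega)).symm
  refine Finset.disjoint_left.mpr fun x hxi hxj => ?_
  have hx : x ∈ peel G (i+1) := peel_anti G hij (maxInd_subset G (peel G j) hxj)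
  simp only [peel, Finset.mem_sdiff] at hx
  exact hx.2 hxi
end Peel


lemma triangle_sum (I : Finset ℕ) :
    I.card * (I.card + 1) ≤ 2 * ∑ i ∈ I, (I.filter (fun j => i ≤ j)).card := by
  induction I using Finset.strongInductionOn with
  | _ I ih =>
    rcases I.eq_empty_or_nonempty with rfl | hne
    · simp
    · set m := I.min' hne with hm
      have hmem : m ∈ I := I.min'_mem hne
      have hins : insert m (I.erase m) = I := Finset.insert_erase hmem
      have hsum : ∑ i ∈ I, (I.filter (fun j => i ≤ j)).card
          = (I.filter (fun j => m ≤ j)).card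
            + ∑ i ∈ I.erase m, (I.filter (fun j => i ≤ j)).card := by
        rw [← hins, Finset.sum_insert (Finset.notMem_erase m I)]
        simp [hins]
      have hfm : I.filter (fun j => m ≤ j) = I := by
        apply Finset.filter_true_of_mem
        intro j hj; exact I.min'_le j hj
      have hfi : ∀ i ∈ I.erase m, I.filter (fun j => i ≤ j)
          = (I.erase m).filter (fun j => i ≤ j) := by
        intro i hi
        have hmi : m < i := by
          rcases Finset.mem_erase.mp hi with ⟨hne', hiI⟩
          exact lt_of_le_of_ne (I.min'_le i hiI) (Ne.symm hne')
        ext j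
        simp only [Finset.mem_filter, Finset.mem_erase]
        constructor
        · rintro ⟨hjI, hij⟩
          exact ⟨⟨by omega, hjI⟩, hij⟩
        · rintro ⟨⟨_, hjI⟩, hij⟩; exact ⟨hjI, hij⟩
      have hih := ih (I.erase m) (Finset.erase_ssubset hmem)
      have hcard : (I.erase m).card + 1 = I.card := by
        rw [Finset.card_erase_of_mem hmem]
        have : 1 ≤ I.card := Finset.card_pos.mpr hne
        omega
      have hsum2 : ∑ i ∈ I.erase m, (I.filter (fun j => i ≤ j)).card
          = ∑ i ∈ I.erase m, ((I.erase m).filter (fun j => i ≤ j)).card :=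
        Finset.sum_congr rfl (fun i hi => by rw [hfi i hi])
      rw [hsum, hfm, hsum2, ← hcard]
      nlinarith [hih]

theorem lower_bound {V : Type} [Fintype V] [DecidableEq V] (H : SimpleGraph V) (χ : ℕ)
    (hcol : H.Colorable χ) (k : ℤ) (m : ℕ) (G : SimpleGraph (Fin m)) (hA : ArrowsR G H) :
    2 * k * (Fintype.card V : ℤ) - (χ : ℤ) * k * (k - 1) ≤ 2 * (m : ℤ) := by
  classical
  obtain ⟨f, finj⟩ := hA (pcol G) (fun u v h => pcol_proper G h)
  let σ := hcol.some
  let c : Fin m → ℕ := pcol G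
  let Tq : Fin χ → Finset V := fun q => Finset.univ.filter (fun v => σ v = q)
  let Mi : ℕ → Finset (Fin m) := fun i => maxInd G (peel G i)
  let Iq : Fin χ → Finset ℕ := fun q => (Tq q).image (fun v => c (f v))
  have ginj : Function.Injective (fun v => c (f v)) := finj
  have hIqcard : ∀ q, (Iq q).card = (Tq q).card := fun q =>
    Finset.card_image_of_injective _ ginj
  -- per-color-of-G bound
  have key : ∀ q, ∀ i ∈ Iq q, ((Iq q).filter (fun j => i ≤ j)).card ≤ (Mi i).card := by
    intro q i _
    have himg : (Iq q).filter (fun j => i ≤ j)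
        = ((Tq q).filter (fun v => i ≤ c (f v))).image (fun v => c (f v)) :=
      Finset.filter_image
    rw [himg, Finset.card_image_of_injective _ ginj]
    have hfim : (((Tq q).filter (fun v => i ≤ c (f v))).image f).card
        = ((Tq q).filter (fun v => i ≤ c (f v))).card :=
      Finset.card_image_of_injective _ f.injective
    rw [← hfim]
    refine maxInd_max G (peel G i) ?_ ?_
    · intro x hx
      obtain ⟨a, ha, rfl⟩ := Finset.mem_image.mp hx
      exact mem_peel_of_le G (Finset.mem_filter.mp ha).2
    · intro x hx y hy hadj
      obtain ⟨a, ha, rfl⟩ := Finset.mem_image.mp hx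
      obtain ⟨b, hb, rfl⟩ := Finset.mem_image.mp hy
      have hab : H.Adj a b := f.map_rel_iff.mp hadj
      have ha' := (Finset.mem_filter.mp (Finset.mem_filter.mp ha).1).2
      have hb' := (Finset.mem_filter.mp (Finset.mem_filter.mp hb).1).2
      exact σ.valid hab (ha'.trans hb'.symm)
  have perq : ∀ q : Fin χ, (Tq q).card * ((Tq q).card + 1)
      ≤ 2 * ∑ i ∈ Iq q, (Mi i).card := by
    intro q
    calc (Tq q).card * ((Tq q).card + 1) = (Iq q).card * ((Iq q).card + 1) := by
          rw [hIqcard]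
      _ ≤ 2 * ∑ i ∈ Iq q, ((Iq q).filter (fun j => i ≤ j)).card := triangle_sum _
      _ ≤ 2 * ∑ i ∈ Iq q, (Mi i).card := by
          have := Finset.sum_le_sum (key q)
          omega
  -- disjointness of the color sets for different classes
  have hTdisj : ∀ q q' : Fin χ, q ≠ q' → Disjoint (Iq q) (Iq q') := by
    intro q q' hqq
    apply (Finset.disjoint_image ginj).mpr
    refine Finset.disjoint_left.mpr fun v hv hv' => ?_
    have h1 := (Finset.mem_filter.mp hv).2
    have h2 := (Finset.mem_filter.mp hv').2
    exact hqq (h1 ▸ h2 ▸ rfl)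
  have hglob : ∑ q : Fin χ, ∑ i ∈ Iq q, (Mi i).card ≤ m := by
    have hpd : Set.PairwiseDisjoint ↑(Finset.univ : Finset (Fin χ)) Iq := by
      intro q _ q' _ h
      exact hTdisj q q' h
    rw [← Finset.sum_biUnion hpd]
    set I := (Finset.univ : Finset (Fin χ)).biUnion Iq
    have hMd : ∀ i ∈ I, ∀ j ∈ I, i ≠ j → Disjoint (Mi i) (Mi j) := by
      intro i _ j _ hij
      exact maxInd_peel_disjoint G hij
    calc ∑ i ∈ I, (Mi i).card = (I.biUnion Mi).card := (Finset.card_biUnion hMd).symm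
      _ ≤ Fintype.card (Fin m) := Finset.card_le_univ _
      _ = m := Fintype.card_fin m
  have main : ∑ q : Fin χ, (Tq q).card * ((Tq q).card + 1) ≤ 2 * m := by
    calc ∑ q : Fin χ, (Tq q).card * ((Tq q).card + 1)
        ≤ ∑ q : Fin χ, 2 * ∑ i ∈ Iq q, (Mi i).card := Finset.sum_le_sum (fun q _ => perq q)
      _ = 2 * ∑ q : Fin χ, ∑ i ∈ Iq q, (Mi i).card := by rw [Finset.mul_sum]
      _ ≤ 2 * m := by omega
  have hTsum : ∑ q : Fin χ, (Tq q).card = Fintype.card V := by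
    rw [← Finset.card_univ (α := V)]
    exact (Finset.card_eq_sum_card_fiberwise (f := fun v => σ v)
      (t := Finset.univ) (fun x _ => Finset.mem_univ _)).symm
  -- integer inequality
  have hq : ∀ q : Fin χ, 2 * k * ((Tq q).card : ℤ) - k * (k - 1)
      ≤ ((Tq q).card : ℤ) * (((Tq q).card : ℤ) + 1) := by
    intro q
    set x : ℤ := ((Tq q).card : ℤ)
    have h0 : 0 ≤ (x - k) * (x - k + 1) := by
      rcases le_or_gt k x with h | h
      · have : 0 ≤ x - k := by omega
        nlinarith
      · have : x - k + 1 ≤ 0 := by omega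
        nlinarith
    nlinarith
  have hsumZ : 2 * k * (Fintype.card V : ℤ) - (χ : ℤ) * k * (k - 1)
      ≤ ∑ q : Fin χ, ((Tq q).card : ℤ) * (((Tq q).card : ℤ) + 1) := by
    have := Finset.sum_le_sum (fun q (_ : q ∈ (Finset.univ : Finset (Fin χ))) => hq q)
    have hs1 : ∑ q : Fin χ, (2 * k * ((Tq q).card : ℤ) - k * (k - 1))
        = 2 * k * (Fintype.card V : ℤ) - (χ : ℤ) * k * (k - 1) := by
      rw [Finset.sum_sub_distrib, Finset.sum_const, ← Finset.mul_sum, ← Nat.cast_sum]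
      simp only [hTsum, Finset.card_univ, Fintype.card_fin, smul_eq_mul, nsmul_eq_mul]
      ring
    linarith [hs1 ▸ this]
  have castmain : ∑ q : Fin χ, ((Tq q).card : ℤ) * (((Tq q).card : ℤ) + 1) ≤ 2 * (m : ℤ) := by
    have : ((∑ q : Fin χ, (Tq q).card * ((Tq q).card + 1) : ℕ) : ℤ) ≤ ((2 * m : ℕ) : ℤ) := by
      exact_mod_cast main
    push_cast at this
    convert this using 2
  linarith

/-- Blow-up of `H` by cliques of size `n`. -/
def blowup {V : Type} (H : SimpleGraph V) (n : ℕ) : SimpleGraph (V × Fin n) where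
  Adj p q := H.Adj p.1 q.1 ∨ (p.1 = q.1 ∧ p.2 ≠ q.2)
  symm := by
    constructor
    rintro p q (h | ⟨h1, h2⟩)
    · exact Or.inl h.symm
    · exact Or.inr ⟨h1.symm, h2.symm⟩
  loopless := by
    constructor
    rintro p (h | ⟨_, h2⟩)
    · exact H.loopless.irrefl _ h
    · exact h2 rfl

theorem arrows_blowup {V : Type} [Fintype V] [DecidableEq V] (H : SimpleGraph V)
    (n : ℕ) (hn : n = Fintype.card V) :
    ∃ G : SimpleGraph (Fin (n * n)), ArrowsR G H := by
  classical
  have hcard : Fintype.card (V × Fin n) = n * n := by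
    simp [Fintype.card_prod, ← hn]
  let e : (V × Fin n) ≃ Fin (n * n) := Fintype.equivFinOfCardEq hcard
  refine ⟨SimpleGraph.comap (⇑e.symm) (blowup H n), ?_⟩
  intro c hc
  set c' : V × Fin n → ℕ := fun p => c (e p) with hc'
  have hc'p : ∀ p q, (blowup H n).Adj p q → c' p ≠ c' q := by
    intro p q h
    apply hc (e p) (e q)
    simpa [SimpleGraph.comap] using h
  -- Hall system
  let t : V → Finset ℕ := fun v => Finset.image (fun i => c' (v, i)) Finset.univ
  have htcard : ∀ v, (t v).card = n := by
    intro v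
    rw [Finset.card_image_of_injective _ ?_, Finset.card_univ, Fintype.card_fin]
    intro i j hij
    by_contra hne
    exact hc'p (v, i) (v, j) (Or.inr ⟨rfl, hne⟩) hij
  have hall : ∀ s : Finset V, s.card ≤ (s.biUnion t).card := by
    intro s
    rcases s.eq_empty_or_nonempty with rfl | ⟨v, hv⟩
    · simp
    · calc s.card ≤ Fintype.card V := Finset.card_le_univ s
        _ = n := hn.symm
        _ = (t v).card := (htcard v).symm
        _ ≤ (s.biUnion t).card := Finset.card_le_card (Finset.subset_biUnion_of_mem t hv)
  obtain ⟨g, ginj, hg⟩ := (Finset.all_card_le_biUnion_card_iff_exists_injective t).mp hall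
  have hsel : ∀ v : V, ∃ i : Fin n, c' (v, i) = g v := by
    intro v
    obtain ⟨i, _, hi⟩ := Finset.mem_image.mp (hg v)
    exact ⟨i, hi⟩
  choose s hs using hsel
  -- build the embedding
  have hinj : Function.Injective (fun v : V => e (v, s v)) := by
    intro u v h
    have := e.injective h
    exact congrArg Prod.fst this
  refine ⟨⟨⟨fun v => e (v, s v), hinj⟩, ?_⟩, ?_⟩
  · intro u v
    simp only [Function.Embedding.coeFn_mk, SimpleGraph.comap_adj, Equiv.symm_apply_apply]
    constructor
    · rintro (h | ⟨h1, h2⟩)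
      · exact h
      · exact absurd (congrArg s h1) h2
    · exact Or.inl
  · intro u v huv
    simp only [RelEmbedding.coe_mk, Function.Embedding.coeFn_mk] at huv
    have : g u = g v := by rw [← hs u, ← hs v]; exact huv
    exact ginj this

/-- Lower bound: with `n = |V(H)|`, `χ = χ(H)` and `k = ⌈n/χ⌉`, every graph `G`
with `G →r H` has at least `k·n − χ·k·(k−1)/2` vertices, hence
`rho H ≥ k(n − χ(k−1)/2)`. -/
theorem stmt1 {V : Type} [Fintype V] (H : SimpleGraph V) (n χ : ℕ) (k : ℤ)
    (hn : n = Fintype.card V) (hχ : H.chromaticNumber = χ)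
    (hk : k = ⌈(n : ℚ) / (χ : ℚ)⌉) :
    (∀ (m : ℕ) (G : SimpleGraph (Fin m)), ArrowsR G H →
      (k : ℚ) * n - (χ : ℚ) * k * ((k : ℚ) - 1) / 2 ≤ (m : ℚ)) ∧
    (k : ℚ) * ((n : ℚ) - (χ : ℚ) * ((k : ℚ) - 1) / 2) ≤ (rho H : ℚ) := by
  classical
  have hcol : H.Colorable χ := by
    have h := H.colorable_chromaticNumber_of_fintype
    rwa [hχ, ENat.toNat_coe] at h
  have part1 : ∀ (m : ℕ) (G : SimpleGraph (Fin m)), ArrowsR G H →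
      (k : ℚ) * n - (χ : ℚ) * k * ((k : ℚ) - 1) / 2 ≤ (m : ℚ) := by
    intro m G hA
    have hZ := lower_bound H χ hcol k m G hA
    rw [← hn] at hZ
    have hQ : 2 * (k : ℚ) * (n : ℚ) - (χ : ℚ) * (k : ℚ) * ((k : ℚ) - 1) ≤ 2 * (m : ℚ) := by
      exact_mod_cast hZ
    linarith
  refine ⟨part1, ?_⟩
  obtain ⟨G0, hG0⟩ := arrows_blowup H n hn
  have hne : {m : ℕ | ∃ G : SimpleGraph (Fin m), ArrowsR G H}.Nonempty := ⟨n * n, G0, hG0⟩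
  have hmem := Nat.sInf_mem hne
  obtain ⟨G, hG⟩ := hmem
  have h1 := part1 _ G hG
  have h2 : rho H = sInf {m : ℕ | ∃ G : SimpleGraph (Fin m), ArrowsR G H} := rfl
  have h3 : (k : ℚ) * ((n : ℚ) - (χ : ℚ) * ((k : ℚ) - 1) / 2)
      = (k : ℚ) * n - (χ : ℚ) * k * ((k : ℚ) - 1) / 2 := by ring
  rw [h3, h2]
  exact h1
end

section
/- For every n ≥ 1, the edgeless graph A_n on n vertices (the anticlique on n vertices) satisfies ρ(A_n) = n(n+1)/2. -/
def botEmb {β : Type} {G : SimpleGraph β} {n : ℕ} (g : Fin n → β)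
    (hinj : Function.Injective g) (hind : ∀ i j, ¬ G.Adj (g i) (g j)) :
    (⊥ : SimpleGraph (Fin n)) ↪g G :=
  ⟨⟨g, hinj⟩, by intro a b; simp [hind a b]⟩

lemma triangle_arith (n : ℕ) :
    ∃ k, n * (n + 1) / 2 = k ∧ (n + 1) * (n + 1 + 1) / 2 = k + (n + 1) := by
  obtain ⟨k, hk⟩ := Nat.even_mul_succ_self n
  have h2 : n * (n + 1) = 2 * k := by omega
  refine ⟨k, ?_, ?_⟩
  · rw [h2, Nat.mul_div_cancel_left _ (by norm_num)]
  · have h3 : (n + 1) * (n + 1 + 1) = 2 * (k + (n + 1)) := by nlinarith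
    rw [h3, Nat.mul_div_cancel_left _ (by norm_num)]

lemma lower_bound_s4 (n : ℕ) :
    ∀ (α : Type) [Fintype α] [DecidableEq α] (G : SimpleGraph α),
      ArrowsR G (⊥ : SimpleGraph (Fin n)) → n * (n + 1) / 2 ≤ Fintype.card α := by
  induction n with
  | zero => intro α _ _ G _; simp
  | succ n ih =>
    intro α _ _ G hG
    classical
    -- a maximum independent set M
    obtain ⟨M, hMmem, hMmax⟩ := Finset.exists_max_image
      ((Finset.univ : Finset (Finset α)).filter (fun s => ∀ u ∈ s, ∀ v ∈ s, ¬ G.Adj u v))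
      Finset.card ⟨∅, by simp⟩
    have hMind : ∀ u ∈ M, ∀ v ∈ M, ¬ G.Adj u v := (Finset.mem_filter.mp hMmem).2
    -- Step 1: M has at least n+1 elements
    have hMbig : n + 1 ≤ M.card := by
      have hc : ∀ u v : α, G.Adj u v →
          ((Fintype.equivFin α u : ℕ)) ≠ ((Fintype.equivFin α v : ℕ)) := by
        intro u v huv h
        exact G.ne_of_adj huv (by
          have := Fin.val_injective h
          exact (Fintype.equivFin α).injective this)
      obtain ⟨f, hf⟩ := hG _ hc
      have hfinj : Function.Injective (f : Fin (n+1) → α) := f.toEmbedding.injective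
      have hScard : (Finset.image (fun i => f i) Finset.univ).card = n + 1 := by
        rw [Finset.card_image_of_injective _ hfinj, Finset.card_univ, Fintype.card_fin]
      have hSind : ∀ u ∈ Finset.image (fun i => f i) Finset.univ,
          ∀ v ∈ Finset.image (fun i => f i) Finset.univ, ¬ G.Adj u v := by
        intro u hu v hv
        obtain ⟨a, -, rfl⟩ := Finset.mem_image.mp hu
        obtain ⟨b, -, rfl⟩ := Finset.mem_image.mp hv
        rw [f.map_adj_iff]
        simp
      have := hMmax _ (Finset.mem_filter.mpr ⟨Finset.mem_univ _, hSind⟩)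
      omega
    -- Step 2: the complement of M arrows the edgeless graph on n vertices
    set α' := {x : α // x ∉ M} with hα'
    have harr : ArrowsR (G.comap (Subtype.val : α' → α)) (⊥ : SimpleGraph (Fin n)) := by
      intro c' hc'
      set c : α → ℕ := fun x => if h : x ∈ M then 0 else c' ⟨x, h⟩ + 1 with hcdef
      have hcprop : ∀ u v : α, G.Adj u v → c u ≠ c v := by
        intro u v huv
        by_cases hu : u ∈ M <;> by_cases hv : v ∈ M <;> simp [hcdef, hu, hv]
        · exact absurd huv (hMind u hu v hv)
        · exact fun h => hc' ⟨u, hu⟩ ⟨v, hv⟩ huv (by omega)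
      obtain ⟨f, hf⟩ := hG c hcprop
      -- at most one vertex of the rainbow set lies in M
      have hone : ∀ i j : Fin (n+1), f i ∈ M → f j ∈ M → i = j := by
        intro i j hi hj
        apply hf
        simp only [hcdef]
        rw [dif_pos hi, dif_pos hj]
      have hfilter : n ≤ (Finset.univ.filter (fun i : Fin (n+1) => f i ∉ M)).card := by
        have h1 : (Finset.univ.filter (fun i : Fin (n+1) => f i ∈ M)).card ≤ 1 := by
          apply Finset.card_le_one.mpr
          intro a ha b hb
          exact hone a b (Finset.mem_filter.mp ha).2 (Finset.mem_filter.mp hb).2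
        have h2 := Finset.card_filter_add_card_filter_not
          (s := (Finset.univ : Finset (Fin (n+1)))) (p := fun i => f i ∈ M)
        simp only [Finset.card_univ, Fintype.card_fin] at h2
        omega
      obtain ⟨T, hTsub, hTcard⟩ := Finset.exists_subset_card_eq hfilter
      set e := Finset.equivFinOfCardEq hTcard with he
      have hnotM : ∀ i : Fin n, f (e.symm i : Fin (n+1)) ∉ M := by
        intro i
        have := hTsub (e.symm i).2
        exact (Finset.mem_filter.mp this).2
      set g : Fin n → α' := fun i => ⟨f (e.symm i : Fin (n+1)), hnotM i⟩ with hg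
      have hcg : ∀ i, c' (g i) + 1 = c (f (e.symm i : Fin (n+1))) := by
        intro i
        simp only [hcdef]
        rw [dif_neg (hnotM i)]
      have hginj : Function.Injective (fun i => c' (g i)) := by
        intro i j hij
        have hij' : c' (g i) = c' (g j) := hij
        have : c (f (e.symm i : Fin (n+1))) = c (f (e.symm j : Fin (n+1))) := by
          rw [← hcg i, ← hcg j, hij']
        have h2 : (e.symm i : Fin (n+1)) = (e.symm j : Fin (n+1)) := hf this
        have h3 : e.symm i = e.symm j := Subtype.ext h2
        exact e.symm.injective h3
      refine ⟨botEmb g (fun i j hij => hginj (congrArg c' hij)) ?_, hginj⟩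
      intro i j hadj
      have : G.Adj (f (e.symm i : Fin (n+1))) (f (e.symm j : Fin (n+1))) := hadj
      rw [f.map_adj_iff] at this
      simp at this
    -- put everything together
    have hcard' := ih α' (G.comap (Subtype.val : α' → α)) harr
    have hsplit : Fintype.card α' = Fintype.card α - M.card := by
      have : Fintype.card {x : α // ¬ x ∈ M} = Fintype.card α - M.card := by
        rw [Fintype.card_subtype_compl, Fintype.card_coe]
      exact this
    have hMle : M.card ≤ Fintype.card α := by
      simpa using Finset.card_le_card (Finset.subset_univ M)
    obtain ⟨k, hk1, hk2⟩ := triangle_arith n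
    rw [hk2]
    rw [hk1] at hcard'
    omega

/-- Disjoint union of cliques of sizes 1, 2, ..., n. -/
def Gsig (n : ℕ) : SimpleGraph (Σ i : Fin n, Fin (i.1 + 1)) where
  Adj u v := u.1 = v.1 ∧ u ≠ v
  symm := ⟨fun u v ⟨h1, h2⟩ => ⟨h1.symm, h2.symm⟩⟩
  loopless := ⟨fun u ⟨_, h⟩ => h rfl⟩

lemma gsig_arrows (n : ℕ) : ArrowsR (Gsig n) (⊥ : SimpleGraph (Fin n)) := by
  classical
  intro c hc
  -- greedy construction of a rainbow independent set
  have key : ∀ k, k ≤ n → ∃ g : Fin k → (Σ i : Fin n, Fin (i.1 + 1)),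
      (∀ i : Fin k, ((g i).1 : ℕ) = (i : ℕ)) ∧ Function.Injective (fun i => c (g i)) := by
    intro k
    induction k with
    | zero => exact fun _ => ⟨Fin.elim0, fun i => i.elim0, fun i => i.elim0⟩
    | succ k ihk =>
      intro hkn
      obtain ⟨g, hg1, hg2⟩ := ihk (by omega)
      have hkn' : k < n := hkn
      set K : Fin n := ⟨k, hkn'⟩ with hK
      set w : Fin (k + 1) → (Σ i : Fin n, Fin (i.1 + 1)) := fun a => ⟨K, a⟩ with hw
      have hwinj : Function.Injective (fun a => c (w a)) := by
        intro a b hab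
        by_contra hne
        have hwne : w a ≠ w b := by
          simp only [hw, ne_eq, Sigma.mk.inj_iff, heq_eq_eq, true_and]
          exact hne
        exact hc (w a) (w b) ⟨rfl, hwne⟩ hab
      -- pick a vertex of the k-th clique with a fresh color
      have hex : ∃ a : Fin (k + 1), ∀ i : Fin k, c (w a) ≠ c (g i) := by
        by_contra hcon
        push_neg at hcon
        have hsub : (Finset.image (fun a => c (w a)) Finset.univ) ⊆
            (Finset.image (fun i => c (g i)) Finset.univ) := by
          intro x hx
          obtain ⟨a, -, rfl⟩ := Finset.mem_image.mp hx
          obtain ⟨i, hi⟩ := hcon a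
          exact Finset.mem_image.mpr ⟨i, Finset.mem_univ _, hi.symm⟩
        have h1 : (Finset.image (fun a => c (w a)) Finset.univ).card = k + 1 := by
          rw [Finset.card_image_of_injective _ hwinj, Finset.card_univ, Fintype.card_fin]
        have h2 : (Finset.image (fun i => c (g i)) Finset.univ).card ≤ k := by
          calc _ ≤ (Finset.univ : Finset (Fin k)).card := Finset.card_image_le
          _ = k := by rw [Finset.card_univ, Fintype.card_fin]
        have := Finset.card_le_card hsub
        omega
      obtain ⟨a, ha⟩ := hex
      refine ⟨fun i => if h : (i : ℕ) < k then g ⟨i, h⟩ else w a, ?_, ?_⟩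
      · intro i
        by_cases h : (i : ℕ) < k
        · simp only [dif_pos h]; exact hg1 ⟨i, h⟩
        · simp only [dif_neg h]
          have h2 := i.isLt
          show (K : ℕ) = (i : ℕ)
          simp only [hK]
          omega
      · intro i j hij
        simp only at hij
        by_cases hi : (i : ℕ) < k <;> by_cases hj : (j : ℕ) < k
        · rw [dif_pos hi, dif_pos hj] at hij
          have := hg2 hij
          have := congrArg Fin.val this
          exact Fin.ext (by simpa using this)
        · rw [dif_pos hi, dif_neg hj] at hij
          exact absurd hij.symm (ha ⟨i, hi⟩)
        · rw [dif_neg hi, dif_pos hj] at hij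
          exact absurd hij (ha ⟨j, hj⟩)
        · have : (i : ℕ) = k := by omega
          have : (j : ℕ) = k := by omega
          apply Fin.ext; omega
  obtain ⟨g, hg1, hg2⟩ := key n le_rfl
  have hginj : Function.Injective g := fun i j h => hg2 (congrArg c h)
  refine ⟨botEmb g hginj ?_, hg2⟩
  intro i j hadj
  obtain ⟨h1, h2⟩ := hadj
  have : (i : ℕ) = (j : ℕ) := by rw [← hg1 i, ← hg1 j, h1]
  exact h2 (congrArg g (Fin.ext this))

lemma card_sigma_triangle (n : ℕ) :
    Fintype.card (Σ i : Fin n, Fin (i.1 + 1)) = n * (n + 1) / 2 := by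
  rw [Fintype.card_sigma]
  simp only [Fintype.card_fin]
  rw [Fin.sum_univ_eq_sum_range (fun i => i + 1) n]
  have h1 : ∑ i ∈ Finset.range (n + 1), (fun i => i) i =
      (∑ i ∈ Finset.range n, (fun i => i) (i + 1)) + (fun i => i) 0 :=
    Finset.sum_range_succ' (fun i => i) n
  simp only [Nat.add_zero] at h1
  rw [← h1, Finset.sum_range_id]
  simp [Nat.succ_sub_one, Nat.mul_comm]

lemma exists_arrows_fin (n : ℕ) :
    ∃ G : SimpleGraph (Fin (n * (n + 1) / 2)), ArrowsR G (⊥ : SimpleGraph (Fin n)) := by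
  classical
  set e := Fintype.equivFinOfCardEq (card_sigma_triangle n) with he
  refine ⟨(Gsig n).comap e.symm, ?_⟩
  intro c hc
  have hc' : ∀ u v : (Σ i : Fin n, Fin (i.1 + 1)), (Gsig n).Adj u v → c (e u) ≠ c (e v) := by
    intro u v huv
    apply hc
    show (Gsig n).Adj (e.symm (e u)) (e.symm (e v))
    simpa using huv
  obtain ⟨f, hf⟩ := gsig_arrows n (fun x => c (e x)) hc'
  refine ⟨botEmb (fun i => e (f i)) (fun i j h => f.toEmbedding.injective (e.injective h)) ?_, hf⟩
  intro i j hadj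
  have : (Gsig n).Adj (e.symm (e (f i))) (e.symm (e (f j))) := hadj
  simp only [Equiv.symm_apply_apply] at this
  rw [f.map_adj_iff] at this
  simp at this


/-- `ρ(A_n) = n(n+1)/2` for the edgeless graph on `n ≥ 1` vertices. -/
theorem stmt4 (n : ℕ) (hn : 1 ≤ n) :
    rho (⊥ : SimpleGraph (Fin n)) = n * (n + 1) / 2 := by
  have hmem : n * (n + 1) / 2 ∈ {m : ℕ | ∃ G : SimpleGraph (Fin m), ArrowsR G (⊥ : SimpleGraph (Fin n))} :=
    exists_arrows_fin n
  refine le_antisymm (Nat.sInf_le hmem) (le_csInf ⟨_, hmem⟩ ?_)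
  intro b hb
  obtain ⟨G, hG⟩ := hb
  simpa using lower_bound_s4 n (Fin b) G hG
end

section
/- Let H be a finite simple graph on n vertices with chromatic number χ and with m' non-edges, and let k = ⌈n/χ⌉. Then the lower and upper bounds k(n − χ(k−1)/2) and n + m' are equal if and only if H is isomorphic to the Turán graph T(n,χ). -/
open Finset SimpleGraph


lemma divmod_succ {χ : ℕ} (hχ : 0 < χ) (n : ℕ) :
    (n % χ + 1 < χ ∧ (n+1) / χ = n / χ ∧ (n+1) % χ = n % χ + 1) ∨
    (n % χ + 1 = χ ∧ (n+1) / χ = n / χ + 1 ∧ (n+1) % χ = 0) := by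
  have hd : n % χ < χ := Nat.mod_lt _ hχ
  have hdm : χ * (n / χ) + n % χ = n := Nat.div_add_mod n χ
  have hmul : χ * (n / χ + 1) = χ * (n / χ) + χ := by ring
  by_cases hcase : n % χ + 1 = χ
  · refine Or.inr ⟨hcase, ?_⟩
    have h : (n+1) / χ = n / χ + 1 ∧ (n+1) % χ = 0 :=
      (Nat.div_mod_unique hχ).mpr ⟨by omega, hχ⟩
    exact h
  · refine Or.inl ⟨by omega, ?_⟩
    have h : (n+1) / χ = n / χ ∧ (n+1) % χ = n % χ + 1 :=
      (Nat.div_mod_unique hχ).mpr ⟨by omega, by omega⟩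
    exact h

lemma fibcard {χ : ℕ} (hχ : 0 < χ) : ∀ n c, c < χ →
    #((Finset.range n).filter (fun x => x % χ = c)) = n / χ + (if c < n % χ then 1 else 0) := by
  intro n
  induction n with
  | zero => intro c hc; simp
  | succ n ih =>
    intro c hc
    rw [Finset.range_add_one, Finset.filter_insert]
    by_cases hc2 : n % χ = c
    · rw [if_pos hc2, Finset.card_insert_of_notMem (by simp), ih c hc]
      rcases divmod_succ hχ n with ⟨e0, e1, e2⟩ | ⟨e0, e1, e2⟩ <;> rw [e1, e2] <;>
        split_ifs <;> omega
    · rw [if_neg hc2, ih c hc]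
      rcases divmod_succ hχ n with ⟨e0, e1, e2⟩ | ⟨e0, e1, e2⟩ <;> rw [e1, e2] <;>
        split_ifs <;> omega

lemma turan_compl_count (n χ : ℕ) (hχ : 0 < χ) :
    2 * #((turanGraph n χ)ᶜ.edgeFinset) + n
      = (n % χ) * (n / χ + 1)^2 + (χ - n % χ) * (n / χ)^2 := by
  classical
  set q := n / χ
  set r := n % χ
  have hr : r < χ := Nat.mod_lt _ hχ
  -- fiber sizes over Fin n
  set s : ℕ → ℕ := fun c => #(univ.filter (fun w : Fin n => (w : ℕ) % χ = c)) with hs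
  have hsval : ∀ c, c < χ → s c = q + (if c < r then 1 else 0) := by
    intro c hc
    have hcard : s c = #((Finset.range n).filter (fun x => x % χ = c)) := by
      refine Finset.card_bij (fun w _ => (w : ℕ)) ?_ ?_ ?_
      · intro w hw
        simp only [Finset.mem_filter, Finset.mem_range, Finset.mem_univ, true_and] at hw ⊢
        exact ⟨w.2, hw⟩
      · intro a ha b hb hab; exact Fin.val_injective hab
      · intro x hx
        simp only [Finset.mem_filter, Finset.mem_range] at hx
        exact ⟨⟨x, hx.1⟩, by simp [hx.2], rfl⟩
    rw [hcard, fibcard hχ n c hc]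
  -- degree computation
  have hdeg : ∀ v : Fin n, (turanGraph n χ)ᶜ.degree v + 1 = s ((v : ℕ) % χ) := by
    intro v
    rw [degree, neighborFinset_eq_filter]
    have : (univ.filter (fun w : Fin n => ((turanGraph n χ)ᶜ).Adj v w))
        = (univ.filter (fun w : Fin n => (w : ℕ) % χ = (v : ℕ) % χ)).erase v := by
      ext w
      simp only [mem_filter, mem_erase, mem_univ, true_and, compl_adj, turanGraph, not_not,
        ne_eq]
      constructor
      · rintro ⟨h1, h2⟩; exact ⟨fun h => h1 h.symm, by omega⟩
      · rintro ⟨h1, h2⟩; exact ⟨fun h => h1 h.symm, by omega⟩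
    rw [this, Finset.card_erase_add_one (by simp)]
  -- sum over vertices
  have hsum : ∑ v : Fin n, ((turanGraph n χ)ᶜ.degree v + 1) = ∑ c ∈ Finset.range χ, s c * s c := by
    have h1 : ∑ v : Fin n, ((turanGraph n χ)ᶜ.degree v + 1) = ∑ v : Fin n, s ((v : ℕ) % χ) :=
      Finset.sum_congr rfl fun v _ => hdeg v
    rw [h1, ← Finset.sum_fiberwise_of_maps_to
      (g := fun v : Fin n => (v : ℕ) % χ) (t := Finset.range χ)
      (fun v _ => Finset.mem_range.mpr (Nat.mod_lt _ hχ))]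
    refine Finset.sum_congr rfl fun c hc => ?_
    rw [Finset.sum_congr rfl (fun v hv => by
      rw [(Finset.mem_filter.mp hv).2]), Finset.sum_const, smul_eq_mul]
  have hleft : ∑ v : Fin n, ((turanGraph n χ)ᶜ.degree v + 1)
      = 2 * #((turanGraph n χ)ᶜ.edgeFinset) + n := by
    rw [Finset.sum_add_distrib, sum_degrees_eq_twice_card_edges]
    simp
  have hright : ∑ c ∈ Finset.range χ, s c * s c = r * (q + 1)^2 + (χ - r) * q^2 := by
    have step : ∀ c ∈ Finset.range χ, s c * s c = (if c < r then (q+1)^2 else q^2) := by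
      intro c hc
      rw [hsval c (Finset.mem_range.mp hc)]
      split_ifs with h <;> ring
    rw [Finset.sum_congr rfl step, Finset.sum_ite, Finset.sum_const, Finset.sum_const]
    have c1 : (Finset.range χ).filter (fun c => c < r) = Finset.range r := by
      ext c; simp only [Finset.mem_filter, Finset.mem_range]; omega
    have c2 : (Finset.range χ).filter (fun c => ¬ c < r) = Finset.Ico r χ := by
      ext c; simp only [Finset.mem_filter, Finset.mem_range, Finset.mem_Ico]; omega
    rw [c1, c2, Finset.card_range, Nat.card_Ico, smul_eq_mul, smul_eq_mul]
  rw [← hleft, hsum, hright]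

lemma card_edgeFinset_add_compl {V : Type} [Fintype V] [DecidableEq V]
    (G : SimpleGraph V) [DecidableRel G.Adj] :
    G.edgeFinset.card + #Gᶜ.edgeFinset = (Fintype.card V).choose 2 := by
  classical
  have hdisj : Disjoint G.edgeFinset Gᶜ.edgeFinset := by
    rw [Finset.disjoint_left]
    intro e he he'
    induction e with
    | _ a b =>
      rw [mem_edgeFinset, mem_edgeSet] at he he'
      exact he'.2 he
  have hunion : G.edgeFinset ∪ Gᶜ.edgeFinset = (⊤ : SimpleGraph V).edgeFinset := by
    ext e
    induction e with
    | _ a b =>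
      simp only [Finset.mem_union, mem_edgeFinset, mem_edgeSet, compl_adj, top_adj]
      constructor
      · rintro (h | h)
        · exact h.ne
        · exact h.1
      · intro h
        by_cases hadj : G.Adj a b
        · exact Or.inl hadj
        · exact Or.inr ⟨h, hadj⟩
  rw [← Finset.card_union_of_disjoint hdisj, hunion,
    card_edgeFinset_top_eq_card_choose_two]

lemma k_value (n χ : ℕ) (hχ : 0 < χ) (k : ℤ) (hk : k = ⌈(n : ℚ) / (χ : ℚ)⌉) :
    k = (n / χ : ℕ) + (if n % χ = 0 then 0 else 1) := by
  have hq0 : (0 : ℚ) < (χ : ℚ) := by exact_mod_cast hχ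
  have h1 : ((n : ℚ) / (χ : ℚ)) ≤ (k : ℚ) := hk ▸ Int.le_ceil _
  have h2 : (k : ℚ) < (n : ℚ) / (χ : ℚ) + 1 := hk ▸ Int.ceil_lt_add_one _
  have hl : (n : ℚ) ≤ (χ : ℚ) * (k : ℚ) := by
    rw [div_le_iff₀ hq0] at h1; linarith
  have hu : (χ : ℚ) * (k : ℚ) < (n : ℚ) + (χ : ℚ) := by
    have h3 : (k : ℚ) * (χ : ℚ) < ((n : ℚ) / (χ : ℚ) + 1) * (χ : ℚ) :=
      mul_lt_mul_of_pos_right h2 hq0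
    rw [add_mul, div_mul_cancel₀ _ (ne_of_gt hq0), one_mul] at h3
    linarith
  have hlz : (n : ℤ) ≤ (χ : ℤ) * k := by exact_mod_cast hl
  have huz : (χ : ℤ) * k < (n : ℤ) + (χ : ℤ) := by exact_mod_cast hu
  set q : ℤ := ((n / χ : ℕ) : ℤ) with hqdef
  set r : ℤ := ((n % χ : ℕ) : ℤ) with hrdef
  have hnqr : (χ : ℤ) * q + r = (n : ℤ) := by
    rw [hqdef, hrdef]; exact_mod_cast Nat.div_add_mod n χ
  have hrlt : r < (χ : ℤ) := by rw [hrdef]; exact_mod_cast Nat.mod_lt n hχ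
  have hrnn : 0 ≤ r := by rw [hrdef]; exact Int.natCast_nonneg _
  have hχz : (0 : ℤ) < (χ : ℤ) := by exact_mod_cast hχ
  have expand1 : (χ : ℤ) * (q + 1) = (χ : ℤ) * q + χ := by ring
  have expand2 : (χ : ℤ) * (q + 2) = (χ : ℤ) * q + χ + χ := by ring
  by_cases hr0 : n % χ = 0
  · have hrz : r = 0 := by simp [hrdef, hr0]
    rw [if_pos hr0]
    have hkq : (χ : ℤ) * q ≤ (χ : ℤ) * k := by omega
    have hkq2 : (χ : ℤ) * k < (χ : ℤ) * (q + 1) := by omega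
    have e1 : q ≤ k := le_of_mul_le_mul_left hkq hχz
    have e2 : k < q + 1 := lt_of_mul_lt_mul_left hkq2 (le_of_lt hχz)
    omega
  · rw [if_neg hr0]
    have hrpos : 0 < r := by
      rw [hrdef]; exact_mod_cast Nat.pos_of_ne_zero hr0
    have hkq : (χ : ℤ) * q < (χ : ℤ) * k := by omega
    have hkq2 : (χ : ℤ) * k < (χ : ℤ) * (q + 2) := by omega
    have e1 : q < k := lt_of_mul_lt_mul_left hkq (le_of_lt hχz)
    have e2 : k < q + 2 := lt_of_mul_lt_mul_left hkq2 (le_of_lt hχz)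
    omega

lemma turan_identity (n χ : ℕ) (hχ : 0 < χ) (k : ℤ) (hk : k = ⌈(n : ℚ) / (χ : ℚ)⌉) :
    (k : ℚ) * ((n : ℚ) - (χ : ℚ) * ((k : ℚ) - 1) / 2)
      = (n : ℚ) + (#((turanGraph n χ)ᶜ.edgeFinset) : ℚ) := by
  classical
  set t : ℕ := #((turanGraph n χ)ᶜ.edgeFinset) with ht
  set q : ℕ := n / χ with hqd
  set r : ℕ := n % χ with hrd
  have hrlt : r < χ := Nat.mod_lt _ hχ
  have hcount : 2 * t + n = r * (q + 1)^2 + (χ - r) * q^2 := turan_compl_count n χ hχ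
  have hn' : (n : ℚ) = (χ : ℚ) * (q : ℚ) + (r : ℚ) := by
    have := Nat.div_add_mod n χ
    exact_mod_cast (congrArg (fun x : ℕ => (x : ℚ)) this).symm
  have hcount' : 2 * (t : ℚ) + (n : ℚ)
      = (r : ℚ) * ((q : ℚ) + 1)^2 + ((χ : ℚ) - (r : ℚ)) * (q : ℚ)^2 := by
    have := congrArg (fun x : ℕ => (x : ℚ)) hcount
    push_cast [Nat.cast_sub hrlt.le] at this
    convert this using 2 <;> push_cast <;> ring
  have hkv := k_value n χ hχ k hk
  rw [← hqd, ← hrd] at hkv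
  by_cases hr0 : n % χ = 0
  · have hrz : r = 0 := hr0
    have hk' : (k : ℚ) = (q : ℚ) := by
      rw [hkv, if_pos hr0]; push_cast; try ring
    have hteq : (t : ℚ) = ((χ : ℚ) * (q : ℚ)^2 - (n : ℚ)) / 2 := by
      rw [hrz] at hcount'
      push_cast at hcount'
      linarith
    rw [hk', hteq, hn', hrz]
    push_cast
    ring
  · have hk' : (k : ℚ) = (q : ℚ) + 1 := by
      rw [hkv, if_neg hr0]; push_cast; ring
    have hteq : (t : ℚ) = ((r : ℚ) * ((q : ℚ) + 1)^2 + ((χ : ℚ) - (r : ℚ)) * (q : ℚ)^2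
        - (n : ℚ)) / 2 := by linarith
    rw [hk', hteq, hn']
    ring

/-- The lower bound `k(n − χ(k−1)/2)` and upper bound `n + m'` coincide
if and only if `H` is (isomorphic to) the Turán graph `T(n, χ)`. -/
theorem stmt7 {V : Type} [Fintype V] [Nonempty V] [DecidableEq V]
    (H : SimpleGraph V) [DecidableRel H.Adj] (n χ m' : ℕ) (k : ℤ)
    (hn : n = Fintype.card V) (hχ : H.chromaticNumber = χ)
    (hm : m' = Hᶜ.edgeFinset.card)
    (hk : k = ⌈(n : ℚ) / (χ : ℚ)⌉) :
    (k : ℚ) * ((n : ℚ) - (χ : ℚ) * ((k : ℚ) - 1) / 2) = (n : ℚ) + (m' : ℚ) ↔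
      Nonempty (H ≃g SimpleGraph.turanGraph n χ) := by
  classical
  have hχ0 : 0 < χ := by
    have h1 : 0 < H.chromaticNumber := chromaticNumber_pos H.colorable_of_fintype
    rw [hχ] at h1
    exact_mod_cast h1
  set T := SimpleGraph.turanGraph n χ with hT
  set t : ℕ := #(Tᶜ.edgeFinset) with ht
  have hid := turan_identity n χ hχ0 k hk
  have hiff1 : ((k : ℚ) * ((n : ℚ) - (χ : ℚ) * ((k : ℚ) - 1) / 2) = (n : ℚ) + (m' : ℚ))
      ↔ m' = t := by
    rw [hid]
    constructor
    · intro h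
      have h2 : (m' : ℚ) = (t : ℚ) := by linarith
      exact_mod_cast h2
    · intro h; rw [h]
  rw [hiff1]
  have hcf : H.CliqueFree (χ + 1) :=
    (chromaticNumber_le_iff_colorable.mp hχ.le).cliqueFree (Nat.lt_succ_self χ)
  constructor
  · intro hmt
    -- equal edge counts
    have h1 : #H.edgeFinset + m' = n.choose 2 := by
      rw [hm, hn]; exact card_edgeFinset_add_compl H
    have h2 : #T.edgeFinset + t = n.choose 2 := by
      have := card_edgeFinset_add_compl T
      rwa [Fintype.card_fin] at this
    have hedge : #H.edgeFinset = #T.edgeFinset := by omega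
    -- transfer Turán-maximality
    have e : V ≃ Fin n := Fintype.equivFinOfCardEq hn.symm
    have iso₀ : T.comap e.toEmbedding ≃g T := SimpleGraph.Iso.comap e T
    haveI : DecidableRel (T.comap e.toEmbedding).Adj :=
      fun a b => (inferInstance : Decidable (T.Adj (e a) (e b)))
    have hTM₀ : (T.comap e.toEmbedding).IsTuranMaximal χ :=
      SimpleGraph.isTuranMaximal_of_iso iso₀ hχ0
    have hIT : H.IsTuranMaximal χ := by
      refine ⟨hcf, fun H' _ cf => ?_⟩
      exact (hTM₀.2 cf).trans (le_of_eq (iso₀.card_edgeFinset_eq.trans hedge.symm))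
    have := (SimpleGraph.isTuranMaximal_iff_nonempty_iso_turanGraph hχ0).mp hIT
    rwa [← hn] at this
  · rintro ⟨f⟩
    have fc : Hᶜ ≃g Tᶜ :=
      { toEquiv := f.toEquiv
        map_rel_iff' := by
          intro a b
          simp only [compl_adj, f.map_rel_iff, ne_eq, not_iff_not, RelIso.coe_fn_toEquiv,
            EmbeddingLike.apply_eq_iff_eq]
          try tauto }
    rw [hm]
    exact fc.card_edgeFinset_eq
end

section
/- Let H be a finite simple graph whose vertex set can be partitioned into k independent sets (anticliques) of sizes x_1, x_2, …, x_k. Then ρ(H) ≥ Σ_{i=1}^{k} x_i(x_i + 1)/2. -/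
private def wt (m : ℕ) : ℕ := m * (m + 1) / 2

private lemma wt_succ (m : ℕ) : wt (m + 1) = wt m + (m + 1) := by
  unfold wt
  have h : (m + 1) * (m + 1 + 1) = m * (m + 1) + (m + 1) * 2 := by ring
  rw [h, Nat.add_mul_div_right _ _ (by norm_num : (0:ℕ) < 2)]

/-- There is a rainbow-compatible induced copy of `H[U]` in `G`. -/
private def EmbOn {V A : Type} (H : SimpleGraph V) (G : SimpleGraph A) (U : Finset V) : Prop :=
  ∃ e : {v // v ∈ U} → A, Function.Injective e ∧
    ∀ u w : {v // v ∈ U}, G.Adj (e u) (e w) ↔ H.Adj u.1 w.1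

private lemma core {V : Type} [Fintype V] {k : ℕ} (H : SimpleGraph V) (P : V → Fin k)
    (hindep : ∀ v w : V, P v = P w → ¬ H.Adj v w) :
    ∀ (n : ℕ) (A : Type) [Fintype A] (G : SimpleGraph A) (𝒰 : Set (Finset V)),
      Fintype.card A ≤ n →
      (∀ c : A → ℕ, (∀ u v : A, G.Adj u v → c u ≠ c v) →
        ∃ U ∈ 𝒰, ∃ e : {v // v ∈ U} → A, Function.Injective e ∧
          (∀ u w : {v // v ∈ U}, G.Adj (e u) (e w) ↔ H.Adj u.1 w.1) ∧
          Function.Injective fun u : {v // v ∈ U} => c (e u)) →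
      ∃ U ∈ 𝒰, (∑ i : Fin k, wt ((U.filter fun v => P v = i).card)) ≤ Fintype.card A ∧
        EmbOn H G U := by
  classical
  intro n
  induction n with
  | zero =>
    intro A _inst G 𝒰 hcard hhyp
    have hA : Fintype.card A = 0 := Nat.le_zero.mp hcard
    have hemp : IsEmpty A := Fintype.card_eq_zero_iff.mp hA
    obtain ⟨U, hU, e, hinj, hadj, -⟩ := hhyp (fun _ => 0) (fun u _ _ => hemp.elim u)
    have hUe : U = ∅ := by
      by_contra hne
      obtain ⟨v, hv⟩ := Finset.nonempty_iff_ne_empty.mpr hne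
      exact hemp.elim (e ⟨v, hv⟩)
    refine ⟨U, hU, ?_, e, hinj, hadj⟩
    subst hUe
    simp [wt]
  | succ n ih =>
    intro A _inst G 𝒰 hcard hhyp
    by_cases hA : Fintype.card A = 0
    · have hemp : IsEmpty A := Fintype.card_eq_zero_iff.mp hA
      obtain ⟨U, hU, e, hinj, hadj, -⟩ := hhyp (fun _ => 0) (fun u _ _ => hemp.elim u)
      have hUe : U = ∅ := by
        by_contra hne
        obtain ⟨v, hv⟩ := Finset.nonempty_iff_ne_empty.mpr hne
        exact hemp.elim (e ⟨v, hv⟩)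
      refine ⟨U, hU, ?_, e, hinj, hadj⟩
      subst hUe
      simp [wt]
    · have hApos : 0 < Fintype.card A := Nat.pos_of_ne_zero hA
      -- pick a maximum independent set M
      have hSne : (Finset.univ.filter
          (fun s : Finset A => ∀ a ∈ s, ∀ b ∈ s, ¬ G.Adj a b)).Nonempty :=
        ⟨∅, by simp⟩
      obtain ⟨M, hMmem, hMmax⟩ := Finset.exists_max_image _ Finset.card hSne
      have hMind : ∀ a ∈ M, ∀ b ∈ M, ¬ G.Adj a b := (Finset.mem_filter.mp hMmem).2
      have hMmax' : ∀ s : Finset A, (∀ a ∈ s, ∀ b ∈ s, ¬ G.Adj a b) → s.card ≤ M.card := by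
        intro s hs
        exact hMmax s (Finset.mem_filter.mpr ⟨Finset.mem_univ s, hs⟩)
      have hM1 : 1 ≤ M.card := by
        obtain ⟨a⟩ := Fintype.card_pos_iff.mp hApos
        have h1 := hMmax' {a} (by
          intro u hu v hv
          simp only [Finset.mem_singleton] at hu hv
          subst hu; subst hv; simp)
        simpa using h1
      let A' := {a : A // a ∉ M}
      let G' : SimpleGraph A' := SimpleGraph.comap (fun a : A' => (a : A)) G
      have hcardA' : Fintype.card A' = Fintype.card A - M.card := by
        have h1 : Fintype.card A' = (Finset.univ.filter (fun a : A => a ∉ M)).card :=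
          Fintype.card_subtype _
        have h2 : Finset.univ.filter (fun a : A => a ∉ M) = Finset.univ \ M := by
          ext a; simp
        rw [h1, h2, Finset.card_sdiff_of_subset (Finset.subset_univ M), Finset.card_univ]
      let 𝒰' : Set (Finset V) := {W | EmbOn H G' W ∧
        (W ∈ 𝒰 ∨ ∃ v, v ∉ W ∧ insert v W ∈ 𝒰 ∧ EmbOn H G (insert v W))}
      -- the arrow hypothesis passes to G'
      have hhyp' : ∀ c' : A' → ℕ, (∀ u v : A', G'.Adj u v → c' u ≠ c' v) →
          ∃ U ∈ 𝒰', ∃ e : {v // v ∈ U} → A', Function.Injective e ∧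
            (∀ u w : {v // v ∈ U}, G'.Adj (e u) (e w) ↔ H.Adj u.1 w.1) ∧
            Function.Injective fun u : {v // v ∈ U} => c' (e u) := by
        intro c' hc'
        set c : A → ℕ := fun a => if h : a ∈ M then 0 else c' ⟨a, h⟩ + 1 with hcdef
        have hcM : ∀ a (h : a ∈ M), c a = 0 := by intro a h; simp [hcdef, h]
        have hcnM : ∀ a (h : a ∉ M), c a = c' ⟨a, h⟩ + 1 := by intro a h; simp [hcdef, h]
        have hcprop : ∀ u v : A, G.Adj u v → c u ≠ c v := by
          intro u v huv
          by_cases hu : u ∈ M <;> by_cases hv : v ∈ M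
          · exact absurd huv (hMind u hu v hv)
          · rw [hcM u hu, hcnM v hv]; omega
          · rw [hcnM u hu, hcM v hv]; omega
          · have hne := hc' ⟨u, hu⟩ ⟨v, hv⟩ huv
            rw [hcnM u hu, hcnM v hv]
            intro hh
            exact hne (Nat.succ_injective hh)
        obtain ⟨U, hU, e, hinj, hadjiff, hrb⟩ := hhyp c hcprop
        by_cases hex : ∃ u : {v // v ∈ U}, e u ∈ M
        · obtain ⟨u₀, hu₀⟩ := hex
          have huniq : ∀ u : {v // v ∈ U}, e u ∈ M → u = u₀ := by
            intro u hu
            apply hrb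
            show c (e u) = c (e u₀)
            rw [hcM _ hu, hcM _ hu₀]
          set W := U.erase u₀.1 with hWdef
          have hWU : ∀ w : {v // v ∈ W}, w.1 ∈ U := fun w => Finset.mem_of_mem_erase w.2
          have hnm : ∀ w : {v // v ∈ W}, e ⟨w.1, hWU w⟩ ∉ M := by
            intro w hm
            have h1 := huniq ⟨w.1, hWU w⟩ hm
            have h2 : w.1 = u₀.1 := congrArg Subtype.val h1
            exact (Finset.ne_of_mem_erase w.2) h2
          set e'' : {v // v ∈ W} → A' := fun w => ⟨e ⟨w.1, hWU w⟩, hnm w⟩ with he''def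
          have hinj'' : Function.Injective e'' := by
            intro a b hab
            have h1 : e ⟨a.1, hWU a⟩ = e ⟨b.1, hWU b⟩ := congrArg Subtype.val hab
            have h2 := hinj h1
            have h3 : a.1 = b.1 := Subtype.mk_eq_mk.mp h2
            exact Subtype.ext h3
          have hadj'' : ∀ u w : {v // v ∈ W}, G'.Adj (e'' u) (e'' w) ↔ H.Adj u.1 w.1 :=
            fun u w => hadjiff ⟨u.1, hWU u⟩ ⟨w.1, hWU w⟩
          have hrb'' : Function.Injective fun w : {v // v ∈ W} => c' (e'' w) := by
            intro a b hab
            have h1 : c (e ⟨a.1, hWU a⟩) = c (e ⟨b.1, hWU b⟩) := by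
              rw [hcnM _ (hnm a), hcnM _ (hnm b)]
              exact congrArg (· + 1) hab
            have h2 := hrb h1
            have h3 : a.1 = b.1 := Subtype.mk_eq_mk.mp h2
            exact Subtype.ext h3
          have hins : insert u₀.1 W = U := Finset.insert_erase u₀.2
          have hembU : EmbOn H G (insert u₀.1 W) := by
            rw [hins]; exact ⟨e, hinj, hadjiff⟩
          refine ⟨W, ⟨⟨e'', hinj'', hadj''⟩,
            Or.inr ⟨u₀.1, Finset.notMem_erase _ _, by rw [hins]; exact hU, hembU⟩⟩,
            e'', hinj'', hadj'', hrb''⟩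
        · push_neg at hex
          set e' : {v // v ∈ U} → A' := fun u => ⟨e u, hex u⟩ with he'def
          have hinj' : Function.Injective e' := by
            intro a b hab
            exact hinj (congrArg Subtype.val hab)
          have hadj' : ∀ u w : {v // v ∈ U}, G'.Adj (e' u) (e' w) ↔ H.Adj u.1 w.1 :=
            fun u w => hadjiff u w
          have hrb' : Function.Injective fun u : {v // v ∈ U} => c' (e' u) := by
            intro a b hab
            apply hrb
            show c (e a) = c (e b)
            rw [hcnM _ (hex a), hcnM _ (hex b)]
            exact congrArg (· + 1) hab
          exact ⟨U, ⟨⟨e', hinj', hadj'⟩, Or.inl hU⟩, e', hinj', hadj', hrb'⟩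
      have hcard' : Fintype.card A' ≤ n := by
        have hle : M.card ≤ Fintype.card A := by
          simpa using Finset.card_le_univ M
        omega
      obtain ⟨W, hWmem, hWsum, hWemb⟩ := ih A' G' 𝒰' hcard' hhyp'
      obtain ⟨hWembG', hWor⟩ := hWmem
      have hA'A : Fintype.card A' ≤ Fintype.card A := by
        rw [hcardA']; exact Nat.sub_le _ _
      rcases hWor with hW𝒰 | ⟨v, hvW, hins𝒰, hembU⟩
      · refine ⟨W, hW𝒰, le_trans hWsum hA'A, ?_⟩
        obtain ⟨e, he1, he2⟩ := hWembG'
        exact ⟨fun w => (e w).1, fun a b hab => he1 (Subtype.ext hab), fun u w => he2 u w⟩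
      · set U := insert v W with hUdef
        obtain ⟨e, he1, he2⟩ := hembU
        -- the part of v yields an independent set, bounded by M
        have htle : (U.filter fun u => P u = P v).card ≤ M.card := by
          set T := (U.filter fun u => P u = P v).attach.image
            (fun w => e ⟨w.1, (Finset.mem_filter.mp w.2).1⟩) with hTdef
          have hTind : ∀ a ∈ T, ∀ b ∈ T, ¬ G.Adj a b := by
            intro a ha b hb hab
            rw [hTdef, Finset.mem_image] at ha hb
            obtain ⟨⟨u1, hu1⟩, -, rfl⟩ := ha
            obtain ⟨⟨u2, hu2⟩, -, rfl⟩ := hb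
            have h1 := Finset.mem_filter.mp hu1
            have h2 := Finset.mem_filter.mp hu2
            have hadj : H.Adj u1 u2 := (he2 _ _).mp hab
            exact hindep u1 u2 (h1.2.trans h2.2.symm) hadj
          have hTcard : T.card = (U.filter fun u => P u = P v).card := by
            rw [hTdef, Finset.card_image_of_injective _ ?_, Finset.card_attach]
            intro a b hab
            have h1 := he1 hab
            have h3 : a.1 = b.1 := Subtype.mk_eq_mk.mp h1
            exact Subtype.ext h3
          rw [← hTcard]
          exact hMmax' T hTind
        have hvnot : v ∉ W.filter fun u => P u = P v :=
          fun hmem => hvW (Finset.mem_of_mem_filter _ hmem)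
        have keyv : (U.filter fun u => P u = P v) = insert v (W.filter fun u => P u = P v) := by
          rw [hUdef, Finset.filter_insert, if_pos rfl]
        have h2 : (U.filter fun u => P u = P v).card
            = (W.filter fun u => P u = P v).card + 1 := by
          rw [keyv, Finset.card_insert_of_notMem hvnot]
        have hsumU : (∑ i : Fin k, wt ((U.filter fun u => P u = i).card))
            = (∑ i : Fin k, wt ((W.filter fun u => P u = i).card))
              + ((W.filter fun u => P u = P v).card + 1) := by
          have key : ∀ i ∈ Finset.univ.erase (P v),
              wt ((U.filter fun u => P u = i).card) = wt ((W.filter fun u => P u = i).card) := by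
            intro i hi
            have hne : P v ≠ i := fun hh => (Finset.ne_of_mem_erase hi) hh.symm
            rw [hUdef, Finset.filter_insert, if_neg hne]
          rw [← Finset.sum_erase_add _ _ (Finset.mem_univ (P v)),
            ← Finset.sum_erase_add (Finset.univ)
              (fun i => wt ((W.filter fun u => P u = i).card)) (Finset.mem_univ (P v)),
            Finset.sum_congr rfl key, h2, wt_succ]
          omega
        refine ⟨U, hins𝒰, ?_, e, he1, he2⟩
        have hMA : M.card ≤ Fintype.card A := by simpa using Finset.card_le_univ M
        rw [hsumU]
        omega

private lemma exists_arrow {V : Type} [Fintype V] (H : SimpleGraph V) :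
    ∃ m : ℕ, ∃ G : SimpleGraph (Fin m), ArrowsR G H := by
  classical
  set h := Fintype.card V with hh
  let G0 : SimpleGraph (V × Fin (h + 1)) :=
    { Adj := fun p q => (p.1 = q.1 ∧ p.2 ≠ q.2) ∨ H.Adj p.1 q.1
      symm := by
        refine ⟨?_⟩; rintro p q (⟨h1, h2⟩ | h3)
        · exact Or.inl ⟨h1.symm, h2.symm⟩
        · exact Or.inr h3.symm
      loopless := by
        refine ⟨?_⟩; rintro p (⟨-, h2⟩ | h3)
        · exact h2 rfl
        · exact H.loopless.irrefl _ h3 }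
  have harr0 : ∀ c : V × Fin (h + 1) → ℕ, (∀ u v, G0.Adj u v → c u ≠ c v) →
      ∃ g : V → Fin (h + 1), Function.Injective fun v => c (v, g v) := by
    intro c hc
    have main : ∀ s : Finset V, ∃ g : V → Fin (h + 1),
        Set.InjOn (fun v => c (v, g v)) ↑s := by
      intro s
      induction s using Finset.induction_on with
      | empty => exact ⟨fun _ => ⟨0, Nat.succ_pos h⟩, by simp⟩
      | @insert a s ha ihs =>
        obtain ⟨g, hg⟩ := ihs
        have hinjb : Function.Injective fun b : Fin (h + 1) => c (a, b) := by
          intro b1 b2 hb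
          by_contra hne
          exact hc (a, b1) (a, b2) (Or.inl ⟨rfl, hne⟩) hb
        have hcards : (s.image fun v => c (v, g v)).card
            < (Finset.univ.image fun b : Fin (h + 1) => c (a, b)).card := by
          have hr : (Finset.univ.image fun b : Fin (h + 1) => c (a, b)).card = h + 1 := by
            rw [Finset.card_image_of_injective _ hinjb, Finset.card_univ, Fintype.card_fin]
          rw [hr]
          calc (s.image fun v => c (v, g v)).card ≤ s.card := Finset.card_image_le
            _ ≤ h := by rw [hh]; simpa using Finset.card_le_univ s
            _ < h + 1 := Nat.lt_succ_self h
        have hnsub : ¬ (Finset.univ.image fun b : Fin (h + 1) => c (a, b))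
            ⊆ (s.image fun v => c (v, g v)) :=
          fun hsub => absurd (Finset.card_le_card hsub) (Nat.not_le.mpr hcards)
        obtain ⟨y, hy1, hy2⟩ := Finset.not_subset.mp hnsub
        obtain ⟨b, -, rfl⟩ := Finset.mem_image.mp hy1
        refine ⟨Function.update g a b, ?_⟩
        have hupa : Function.update g a b a = b := Function.update_self a b g
        have hups : ∀ v ∈ s, Function.update g a b v = g v := by
          intro v hv
          have hva : v ≠ a := fun hvaeq => ha (by rwa [hvaeq] at hv)
          exact Function.update_of_ne hva _ _
        intro v1 hv1 v2 hv2 heq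
        simp only [Finset.coe_insert, Set.mem_insert_iff, Finset.mem_coe] at hv1 hv2
        rcases hv1 with rfl | hv1 <;> rcases hv2 with rfl | hv2
        · rfl
        · exfalso
          apply hy2
          rw [Finset.mem_image]
          refine ⟨v2, hv2, ?_⟩
          simpa [hupa, hups v2 hv2] using heq.symm
        · exfalso
          apply hy2
          rw [Finset.mem_image]
          refine ⟨v1, hv1, ?_⟩
          simpa [hupa, hups v1 hv1] using heq
        · have := hg (Finset.mem_coe.mpr hv1) (Finset.mem_coe.mpr hv2)
          apply this
          simpa [hups v1 hv1, hups v2 hv2] using heq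
    obtain ⟨g, hg⟩ := main Finset.univ
    exact ⟨g, fun a b hab => hg (by simp) (by simp) hab⟩
  let m := Fintype.card (V × Fin (h + 1))
  let eqv : (V × Fin (h + 1)) ≃ Fin m := Fintype.equivFin _
  let Gfin : SimpleGraph (Fin m) := SimpleGraph.comap (fun i => eqv.symm i) G0
  refine ⟨m, Gfin, ?_⟩
  intro c hc
  have hc0 : ∀ u v, G0.Adj u v → (fun a => c (eqv a)) u ≠ (fun a => c (eqv a)) v := by
    intro u v huv
    apply hc
    show G0.Adj (eqv.symm (eqv u)) (eqv.symm (eqv v))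
    simpa using huv
  obtain ⟨g, hg⟩ := harr0 (fun a => c (eqv a)) hc0
  have hgadj : ∀ v w : V, G0.Adj (v, g v) (w, g w) ↔ H.Adj v w := by
    intro v w
    constructor
    · rintro (⟨h1, h2⟩ | h3)
      · exact absurd (congrArg g h1) h2
      · exact h3
    · exact fun hvw => Or.inr hvw
  refine ⟨⟨⟨fun v => eqv (v, g v), fun a b hab => congrArg Prod.fst (eqv.injective hab)⟩, ?_⟩, ?_⟩
  · intro a b
    show Gfin.Adj (eqv (a, g a)) (eqv (b, g b)) ↔ H.Adj a b
    have hiff : Gfin.Adj (eqv (a, g a)) (eqv (b, g b)) ↔ G0.Adj (a, g a) (b, g b) := by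
      show G0.Adj (eqv.symm (eqv _)) (eqv.symm (eqv _)) ↔ _
      simp
    rw [hiff, hgadj]
  · intro a b hab
    exact hg hab

/-- If the vertex set of `H` is partitioned into `k` independent sets of sizes
`x 0, …, x (k-1)`, then `ρ(H) ≥ Σ_i x_i (x_i + 1)/2`. -/
theorem stmt8 {V : Type} [Fintype V] (H : SimpleGraph V)
    (k : ℕ) (x : Fin k → ℕ) (P : V → Fin k)
    (hindep : ∀ v w : V, P v = P w → ¬ H.Adj v w)
    (hsize : ∀ i : Fin k, (Finset.univ.filter fun v => P v = i).card = x i) :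
    ∑ i : Fin k, x i * (x i + 1) / 2 ≤ rho H := by
  classical
  obtain ⟨m0, G0, hG0⟩ := exists_arrow H
  have hne : {m : ℕ | ∃ G : SimpleGraph (Fin m), ArrowsR G H}.Nonempty := ⟨m0, ⟨G0, hG0⟩⟩
  have hmem : rho H ∈ {m : ℕ | ∃ G : SimpleGraph (Fin m), ArrowsR G H} := Nat.sInf_mem hne
  obtain ⟨G, hG⟩ := hmem
  have hhyp : ∀ c : Fin (rho H) → ℕ, (∀ u v : Fin (rho H), G.Adj u v → c u ≠ c v) →
      ∃ U ∈ ({Finset.univ} : Set (Finset V)), ∃ e : {v // v ∈ U} → Fin (rho H),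
        Function.Injective e ∧
        (∀ u w : {v // v ∈ U}, G.Adj (e u) (e w) ↔ H.Adj u.1 w.1) ∧
        Function.Injective fun u : {v // v ∈ U} => c (e u) := by
    intro c hc
    obtain ⟨f, hf⟩ := hG c hc
    refine ⟨Finset.univ, rfl, fun u => f u.1, ?_, fun u w => f.map_rel_iff, ?_⟩
    · intro a b hab
      exact Subtype.ext (f.injective hab)
    · intro a b hab
      exact Subtype.ext (hf hab)
  obtain ⟨U, hU, hsum, -⟩ := core H P hindep (Fintype.card (Fin (rho H)))
    (Fin (rho H)) G ({Finset.univ} : Set (Finset V)) le_rfl hhyp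
  have hUuniv : U = Finset.univ := hU
  subst hUuniv
  rw [Fintype.card_fin] at hsum
  calc ∑ i : Fin k, x i * (x i + 1) / 2
      = ∑ i : Fin k, wt ((Finset.univ.filter fun v => P v = i).card) := by
        apply Finset.sum_congr rfl
        intro i _
        rw [hsize i]
        rfl
    _ ≤ rho H := hsum
end

section
/- Let K_{x_1,x_2,…,x_r} be the complete r-partite graph with independent classes of sizes x_1, x_2, …, x_r. Then ρ(K_{x_1,x_2,…,x_r}) = Σ_{i=1}^{r} x_i(x_i + 1)/2. -/
open SimpleGraph


lemma exists_max_indep {V : Type} [Fintype V] (G : SimpleGraph V) :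
    ∃ A : Finset V, (∀ u ∈ A, ∀ v ∈ A, ¬ G.Adj u v) ∧
      ∀ B : Finset V, (∀ u ∈ B, ∀ v ∈ B, ¬ G.Adj u v) → B.card ≤ A.card := by
  classical
  obtain ⟨A, hA, hmax⟩ :=
    Finset.exists_max_image
      (Finset.univ.powerset.filter fun A : Finset V => ∀ u ∈ A, ∀ v ∈ A, ¬ G.Adj u v)
      Finset.card ⟨∅, by simp⟩
  refine ⟨A, (Finset.mem_filter.mp hA).2, fun B hB => hmax B ?_⟩
  exact Finset.mem_filter.mpr ⟨Finset.mem_powerset.mpr (Finset.subset_univ B), hB⟩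

/-- Construction of an avoiding sub-embedding into the induced subgraph on `∉ A`. -/
lemma sub_emb {V : Type} (G : SimpleGraph V) (A : Finset V)
    (r : ℕ) (y : Fin r → ℕ)
    (e : (completeMultipartiteGraph fun i : Fin r => Fin (y i)) ↪g G)
    (y' : Fin r → ℕ) (φ : (Σ i : Fin r, Fin (y' i)) → (Σ i : Fin r, Fin (y i)))
    (hfst : ∀ z, (φ z).1 = z.1) (hφinj : Function.Injective φ)
    (hA : ∀ z, e (φ z) ∉ A) :
    ∃ e' : (completeMultipartiteGraph fun i : Fin r => Fin (y' i)) ↪g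
      (G.comap (fun w : {v : V // v ∉ A} => w.1)),
      ∀ z, (e' z : V) = e (φ z) := by
  refine ⟨⟨⟨fun z => ⟨e (φ z), hA z⟩, ?_⟩, ?_⟩, fun z => rfl⟩
  · intro z z' h
    exact hφinj (e.injective (Subtype.ext_iff.mp h))
  · intro z z'
    show G.Adj (e (φ z)) (e (φ z')) ↔ _
    rw [e.map_rel_iff]
    show (φ z).1 ≠ (φ z').1 ↔ z.1 ≠ z'.1
    rw [hfst, hfst]

lemma lower_bound_s9 (r : ℕ) :
    ∀ (n : ℕ) (V : Type) [Fintype V] (G : SimpleGraph V), Fintype.card V = n →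
      ∃ c : V → ℕ, (∀ u v, G.Adj u v → c u ≠ c v) ∧
        ∀ (y : Fin r → ℕ)
          (e : (completeMultipartiteGraph fun i : Fin r => Fin (y i)) ↪g G),
          (Function.Injective fun h => c (e h)) →
          ∑ i, y i * (y i + 1) ≤ 2 * n := by
  intro n
  induction n using Nat.strong_induction_on with
  | _ n ih =>
  intro V _ G hcard
  classical
  rcases Nat.eq_zero_or_pos n with hn | hn
  · subst hn
    have hemp : IsEmpty V := Fintype.card_eq_zero_iff.mp hcard
    refine ⟨fun _ => 0, fun u v _ => (hemp.false u).elim, ?_⟩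
    intro y e _
    have hy : ∀ i, y i = 0 := by
      intro i
      by_contra h
      exact hemp.false (e ⟨i, ⟨0, Nat.pos_of_ne_zero h⟩⟩)
    simp [hy]
  · obtain ⟨A, hAind, hAmax⟩ := exists_max_indep G
    have hαpos : 1 ≤ A.card := by
      have hne : Nonempty V := Fintype.card_pos_iff.mp (by omega)
      obtain ⟨v⟩ := hne
      have := hAmax {v} (by
        intro u hu w hw
        simp only [Finset.mem_singleton] at hu hw
        subst hu; subst hw; exact G.irrefl)
      simpa using this
    have hαle : A.card ≤ n := by
      have := A.card_le_univ
      simpa [Finset.card_univ, hcard] using this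
    have hcardW : Fintype.card {v : V // v ∉ A} = n - A.card := by
      rw [Fintype.card_subtype_compl]
      simp [Fintype.card_coe, hcard]
    obtain ⟨c', hc'p, hc'r⟩ := ih (n - A.card) (by omega) {v : V // v ∉ A}
      (G.comap (fun w => w.1)) hcardW
    refine ⟨fun v => if h : v ∈ A then 0 else c' ⟨v, h⟩ + 1, ?_, ?_⟩
    · intro u v huv
      by_cases hu : u ∈ A <;> by_cases hv : v ∈ A
      · exact absurd huv (hAind u hu v hv)
      · simp [hu, hv]
      · simp [hu, hv]
      · simp only [dif_neg hu, dif_neg hv]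
        intro h
        exact hc'p ⟨u, hu⟩ ⟨v, hv⟩ huv (by omega)
    · intro y e hinj
      by_cases hex : ∃ h, e h ∈ A
      · obtain ⟨h₀, hh₀⟩ := hex
        have huniq : ∀ h, e h ∈ A → h = h₀ := by
          intro h hh
          apply hinj
          show (if hc : e h ∈ A then 0 else _) = (if hc : e h₀ ∈ A then 0 else _)
          rw [dif_pos hh, dif_pos hh₀]
        obtain ⟨j, a⟩ := h₀
        have hyj1 : 1 ≤ y j := a.pos
        have hmemD : ∀ (i : Fin r) (b : Fin (y i)),
            b ∈ Finset.univ.filter (fun b => e ⟨i, b⟩ ∉ A) ↔ e ⟨i, b⟩ ∉ A := by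
          intro i b; simp
        set D : ∀ i : Fin r, Finset (Fin (y i)) :=
          fun i => Finset.univ.filter (fun b => e ⟨i, b⟩ ∉ A) with hD
        have hDne : ∀ i, i ≠ j → D i = Finset.univ := by
          intro i hij
          ext b
          simp only [Finset.mem_univ, iff_true, hD, hmemD]
          intro hmem
          exact hij (congrArg Sigma.fst (huniq ⟨i, b⟩ hmem))
        have hDj : (D j).card = y j - 1 := by
          have hDjeq : D j = Finset.univ.erase a := by
            ext b
            rw [hmemD, Finset.mem_erase]
            simp only [Finset.mem_univ, and_true]
            constructor
            · intro hb hba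
              apply hb; rw [hba]; exact hh₀
            · intro hb hmem
              exact hb (eq_of_heq (Sigma.mk.inj_iff.mp (huniq ⟨j, b⟩ hmem)).2)
          rw [hDjeq, Finset.card_erase_of_mem (Finset.mem_univ _)]
          simp
        have hyjα : y j ≤ A.card := by
          have hinj2 : Function.Injective (fun b : Fin (y j) => e ⟨j, b⟩) := by
            intro b b' hbb
            exact eq_of_heq (Sigma.mk.inj_iff.mp (e.injective hbb)).2
          refine le_trans ?_ (hAmax (Finset.univ.image fun b : Fin (y j) => e ⟨j, b⟩) ?_)
          · rw [Finset.card_image_of_injective _ hinj2]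
            simp
          · intro u hu v hv
            simp only [Finset.mem_image, Finset.mem_univ, true_and] at hu hv
            obtain ⟨b, rfl⟩ := hu
            obtain ⟨b', rfl⟩ := hv
            intro hadj
            have := e.map_rel_iff.mp hadj
            simp [completeMultipartiteGraph, top_adj] at this
        -- reduced part sizes and vertex selection
        set y' : Fin r → ℕ := fun i => (D i).card with hy'
        set φ : (Σ i : Fin r, Fin (y' i)) → (Σ i : Fin r, Fin (y i)) :=
          fun z => ⟨z.1, ((D z.1).equivFin.symm z.2).1⟩ with hφ
        have hφfst : ∀ z, (φ z).1 = z.1 := fun z => rfl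
        have hφA : ∀ z, e (φ z) ∉ A := by
          intro z
          exact (hmemD _ _).mp ((D z.1).equivFin.symm z.2).2
        have hφinj : Function.Injective φ := by
          intro z z' hzz
          obtain ⟨i, b⟩ := z
          obtain ⟨i', b'⟩ := z'
          have h1 : i = i' := congrArg Sigma.fst hzz
          subst h1
          have h2 : ((D i).equivFin.symm b).1 = ((D i).equivFin.symm b').1 :=
            eq_of_heq (Sigma.mk.inj_iff.mp hzz).2
          have h3 := (D i).equivFin.symm.injective (Subtype.ext h2)
          rw [h3]
        obtain ⟨e'', he''⟩ := sub_emb G A r y e y' φ hφfst hφinj hφA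
        have hr' : Function.Injective fun z => c' (e'' z) := by
          intro z z' h
          replace h : c' (e'' z) = c' (e'' z') := h
          apply hφinj
          apply hinj
          show (if hc : e (φ z) ∈ A then 0 else _) = (if hc : e (φ z') ∈ A then 0 else _)
          rw [dif_neg (hφA z), dif_neg (hφA z')]
          have h1 : c' ⟨e (φ z), hφA z⟩ = c' (e'' z) := by
            congr 1
            exact Subtype.ext (he'' z).symm
          have h2 : c' ⟨e (φ z'), hφA z'⟩ = c' (e'' z') := by
            congr 1
            exact Subtype.ext (he'' z').symm
          omega
        have hsum' := hc'r y' e'' hr'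
        have hterm : ∀ i : Fin r, y i * (y i + 1) =
            y' i * (y' i + 1) + (if i = j then 2 * y j else 0) := by
          intro i
          by_cases hij : i = j
          · rw [hij, if_pos rfl]
            have h1 : y' j = y j - 1 := hDj
            rw [h1]
            obtain ⟨t, ht⟩ : ∃ t, y j = t + 1 := ⟨y j - 1, by omega⟩
            rw [ht]
            simp only [Nat.add_sub_cancel]
            ring
          · have h1 : y' i = y i := by
              show (D i).card = y i
              rw [hDne i hij]
              simp
            rw [h1, if_neg hij]
            omega
        calc ∑ i, y i * (y i + 1)
            = ∑ i, (y' i * (y' i + 1) + if i = j then 2 * y j else 0) :=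
              Finset.sum_congr rfl fun i _ => hterm i
          _ = (∑ i, y' i * (y' i + 1)) + 2 * y j := by
              rw [Finset.sum_add_distrib, Finset.sum_ite_eq' Finset.univ j fun _ => 2 * y j]
              simp
          _ ≤ 2 * (n - A.card) + 2 * A.card := by omega
          _ ≤ 2 * n := by omega
      · push_neg at hex
        obtain ⟨e', he'⟩ := sub_emb G A r y e y id (fun z => rfl) (fun a b h => h) hex
        have hr' : Function.Injective fun z => c' (e' z) := by
          intro z z' h
          replace h : c' (e' z) = c' (e' z') := h
          apply hinj
          show (if hc : e z ∈ A then 0 else _) = (if hc : e z' ∈ A then 0 else _)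
          rw [dif_neg (hex z), dif_neg (hex z')]
          have h1 : c' ⟨e z, hex z⟩ = c' (e' z) := by
            congr 1
            exact Subtype.ext (he' z).symm
          have h2 : c' ⟨e z', hex z'⟩ = c' (e' z') := by
            congr 1
            exact Subtype.ext (he' z').symm
          omega
        have := hc'r y e' hr'
        omega


/-- The extremal graph: parts indexed by `i : Fin r`; part `i` consists of disjoint
cliques of sizes `1, …, x i` (clique `k` has `k+1` vertices); all edges between
distinct parts are present. -/
def Gup (r : ℕ) (x : Fin r → ℕ) :
    SimpleGraph (Σ i : Fin r, Σ k : Fin (x i), Fin (k.1 + 1)) where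
  Adj u v := u ≠ v ∧ (u.1 = v.1 → u.2.1.1 = v.2.1.1)
  symm := by
    constructor
    rintro u v ⟨h1, h2⟩
    exact ⟨fun h => h1 h.symm, fun h => (h2 h.symm).symm⟩
  loopless := ⟨fun u h => h.1 rfl⟩

/-- Greedy selection of a rainbow transversal of the cliques in one part. -/
lemma greedy (m : ℕ) (col : (Σ k : Fin m, Fin (k.1 + 1)) → ℕ)
    (hcol : ∀ (k : Fin m) (a b : Fin (k.1 + 1)), a ≠ b → col ⟨k, a⟩ ≠ col ⟨k, b⟩) :
    ∃ g : (k : Fin m) → Fin (k.1 + 1),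
      ∀ k k', col ⟨k, g k⟩ = col ⟨k', g k'⟩ → k = k' := by
  classical
  suffices h : ∀ n, n ≤ m → ∃ g : (k : Fin m) → Fin (k.1 + 1),
      ∀ k k', k.1 < n → k'.1 < n → col ⟨k, g k⟩ = col ⟨k', g k'⟩ → k = k' by
    obtain ⟨g, hg⟩ := h m le_rfl
    exact ⟨g, fun k k' => hg k k' k.2 k'.2⟩
  intro n
  induction n with
  | zero => exact fun _ => ⟨fun k => ⟨0, Nat.succ_pos _⟩, fun k k' h => by omega⟩
  | succ s ihn =>
    intro hsm
    obtain ⟨g, hg⟩ := ihn (by omega)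
    have hk₀ : s < m := by omega
    set k₀ : Fin m := ⟨s, hk₀⟩ with hk₀def
    set F : Finset ℕ := (Finset.univ.filter fun k : Fin m => k.1 < s).image
      (fun k => col ⟨k, g k⟩) with hF
    have hFcard : F.card ≤ s := by
      refine le_trans Finset.card_image_le ?_
      have hsub : (Finset.univ.filter fun k : Fin m => k.1 < s) ⊆
          Finset.univ.image fun t : Fin s => (⟨t.1, by omega⟩ : Fin m) := by
        intro k hk
        simp only [Finset.mem_filter, Finset.mem_univ, true_and] at hk
        simp only [Finset.mem_image, Finset.mem_univ, true_and]
        exact ⟨⟨k.1, hk⟩, Fin.ext rfl⟩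
      refine le_trans (Finset.card_le_card hsub) ?_
      refine le_trans Finset.card_image_le ?_
      simp
    have hIinj : Function.Injective (fun a : Fin (s + 1) => col ⟨k₀, a⟩) := by
      intro a b hab
      by_contra h
      exact hcol k₀ a b h hab
    have hIcard : (Finset.univ.image fun a : Fin (s + 1) => col ⟨k₀, a⟩).card = s + 1 := by
      rw [Finset.card_image_of_injective _ hIinj]
      simp
    have hexa : ∃ a : Fin (s + 1), col ⟨k₀, a⟩ ∉ F := by
      by_contra hcon
      push_neg at hcon
      have hsub : (Finset.univ.image fun a : Fin (s + 1) => col ⟨k₀, a⟩) ⊆ F := by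
        intro v hv
        simp only [Finset.mem_image, Finset.mem_univ, true_and] at hv
        obtain ⟨a, rfl⟩ := hv
        exact hcon a
      have := Finset.card_le_card hsub
      omega
    obtain ⟨a, ha⟩ := hexa
    refine ⟨Function.update g k₀ a, ?_⟩
    intro k k' hk hk' hcc
    have hupd : ∀ kk : Fin m, kk.1 < s → Function.update g k₀ a kk = g kk := by
      intro kk hkk
      exact Function.update_of_ne (Fin.ne_of_val_ne (i := kk) (j := k₀) (show kk.1 ≠ s by omega)) a g
    rcases Nat.lt_or_ge k.1 s with hks | hks <;> rcases Nat.lt_or_ge k'.1 s with hks' | hks'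
    · rw [hupd k hks, hupd k' hks'] at hcc
      exact hg k k' hks hks' hcc
    · have hkk' : k' = k₀ := Fin.ext (show k'.1 = s by omega)
      subst hkk'
      rw [hupd k hks, Function.update_self] at hcc
      exfalso
      apply ha
      rw [← hcc]
      refine Finset.mem_image.mpr ⟨k, ?_, rfl⟩
      simp [hks]
    · have hkk : k = k₀ := Fin.ext (show k.1 = s by omega)
      subst hkk
      rw [hupd k' hks', Function.update_self] at hcc
      exfalso
      apply ha
      rw [hcc]
      refine Finset.mem_image.mpr ⟨k', ?_, rfl⟩
      simp [hks']
    · exact Fin.ext (by omega)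

lemma upper_arrows (r : ℕ) (x : Fin r → ℕ) :
    ∀ c : (Σ i : Fin r, Σ k : Fin (x i), Fin (k.1 + 1)) → ℕ,
      (∀ u v, (Gup r x).Adj u v → c u ≠ c v) →
      ∃ f : (completeMultipartiteGraph fun i : Fin r => Fin (x i)) ↪g Gup r x,
        Function.Injective fun h => c (f h) := by
  intro c hc
  have hpart : ∀ i : Fin r, ∃ g : (k : Fin (x i)) → Fin (k.1 + 1),
      ∀ k k', c ⟨i, k, g k⟩ = c ⟨i, k', g k'⟩ → k = k' := by
    intro i
    apply greedy (x i) (fun p => c ⟨i, p⟩)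
    intro k a b hab
    apply hc
    refine And.intro ?_ ?_
    · intro h
      apply hab
      have := (Sigma.mk.inj_iff.mp h).2
      have h2 := eq_of_heq this
      exact eq_of_heq (Sigma.mk.inj_iff.mp h2).2
    · intro _
      rfl
  choose g hg using hpart
  have hadj : ∀ (i i' : Fin r) (b : Fin (x i)) (b' : Fin (x i')), i ≠ i' →
      (Gup r x).Adj ⟨i, b, g i b⟩ ⟨i', b', g i' b'⟩ := by
    intro i i' b b' hii
    exact And.intro (fun h => hii (congrArg Sigma.fst h)) (fun h => absurd h hii)
  refine ⟨⟨⟨fun z => ⟨z.1, z.2, g z.1 z.2⟩, ?_⟩, ?_⟩, ?_⟩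
  · intro z z' h
    obtain ⟨i, b⟩ := z
    obtain ⟨i', b'⟩ := z'
    have h1 : i = i' := congrArg Sigma.fst h
    subst h1
    have h2 : (⟨b, g i b⟩ : Σ k : Fin (x i), Fin (k.1 + 1)) = ⟨b', g i b'⟩ :=
      eq_of_heq (Sigma.mk.inj_iff.mp h).2
    have h3 : b = b' := congrArg Sigma.fst h2
    subst h3
    rfl
  · intro z z'
    show (Gup r x).Adj ⟨z.1, z.2, g z.1 z.2⟩ ⟨z'.1, z'.2, g z'.1 z'.2⟩ ↔ z.1 ≠ z'.1
    constructor
    · intro hadj' hzz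
      obtain ⟨h1, h2⟩ := (hadj' : _ ≠ _ ∧ _)
      obtain ⟨i, b⟩ := z
      obtain ⟨i', b'⟩ := z'
      simp only at hzz
      subst hzz
      have h3 : b = b' := Fin.ext (h2 rfl)
      subst h3
      exact h1 rfl
    · exact fun h => hadj _ _ _ _ h
  · intro z z' h
    replace h : c ⟨z.1, z.2, g z.1 z.2⟩ = c ⟨z'.1, z'.2, g z'.1 z'.2⟩ := h
    obtain ⟨i, b⟩ := z
    obtain ⟨i', b'⟩ := z'
    simp only at h
    by_cases hii : i = i'
    · subst hii
      have h3 : b = b' := hg i b b' h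
      subst h3
      rfl
    · exact absurd h (hc _ _ (hadj i i' b b' hii))

lemma gauss2 (n : ℕ) : 2 * ∑ k : Fin n, (k.1 + 1) = n * (n + 1) := by
  induction n with
  | zero => simp
  | succ s ih =>
    rw [Fin.sum_univ_castSucc]
    simp only [Fin.coe_castSucc, Fin.val_last]
    rw [Nat.mul_add, ih]
    ring

lemma gauss (n : ℕ) : ∑ k : Fin n, (k.1 + 1) = n * (n + 1) / 2 := by
  have := gauss2 n
  omega

lemma card_Gup (r : ℕ) (x : Fin r → ℕ) :
    Fintype.card (Σ i : Fin r, Σ k : Fin (x i), Fin (k.1 + 1)) =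
      ∑ i : Fin r, x i * (x i + 1) / 2 := by
  rw [Fintype.card_sigma]
  refine Finset.sum_congr rfl fun i _ => ?_
  rw [Fintype.card_sigma]
  simp only [Fintype.card_fin]
  exact gauss (x i)


lemma arrows_transfer {α γ : Type} {β : Type} {G : SimpleGraph α} {H : SimpleGraph β}
    (e : γ ≃ α) (h : ArrowsR G H) : ArrowsR (G.comap e) H := by
  intro c hc
  obtain ⟨f, hf⟩ := h (c ∘ e.symm) (by
    intro u v huv
    have : (G.comap ⇑e).Adj (e.symm u) (e.symm v) := by
      show G.Adj (e (e.symm u)) (e (e.symm v))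
      simpa using huv
    exact hc _ _ this)
  refine ⟨⟨⟨fun z => e.symm (f z), ?_⟩, ?_⟩, ?_⟩
  · intro z z' hzz
    exact f.injective (e.symm.injective hzz)
  · intro z z'
    show G.Adj (e (e.symm (f z))) (e (e.symm (f z'))) ↔ _
    simpa using f.map_rel_iff
  · exact hf

/-- For the complete `r`-partite graph with class sizes `x 0, …, x (r-1)`:
`ρ(K_{x_1,…,x_r}) = Σ_i x_i (x_i + 1)/2`. -/
theorem stmt9 (r : ℕ) (x : Fin r → ℕ) (hx : ∀ i, 1 ≤ x i) :
    rho (SimpleGraph.completeMultipartiteGraph fun i : Fin r => Fin (x i)) =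
      ∑ i : Fin r, x i * (x i + 1) / 2 := by
  classical
  set m := ∑ i : Fin r, x i * (x i + 1) / 2 with hm
  have hcard : Fintype.card (Σ i : Fin r, Σ k : Fin (x i), Fin (k.1 + 1)) = m := card_Gup r x
  set e : (Σ i : Fin r, Σ k : Fin (x i), Fin (k.1 + 1)) ≃ Fin m :=
    Fintype.equivFinOfCardEq hcard with he
  have harr : ArrowsR ((Gup r x).comap ⇑e.symm)
      (SimpleGraph.completeMultipartiteGraph fun i : Fin r => Fin (x i)) :=
    arrows_transfer e.symm (upper_arrows r x)
  have hmem : m ∈ {m : ℕ | ∃ G : SimpleGraph (Fin m),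
      ArrowsR G (SimpleGraph.completeMultipartiteGraph fun i : Fin r => Fin (x i))} :=
    ⟨_, harr⟩
  refine le_antisymm (Nat.sInf_le hmem) ?_
  refine le_csInf ⟨m, hmem⟩ ?_
  rintro m' ⟨G, hG⟩
  obtain ⟨c, hcp, hcr⟩ := lower_bound_s9 r m' (Fin m') G (Fintype.card_fin m')
  obtain ⟨f, hf⟩ := hG c hcp
  have hsum := hcr x f hf
  have h2m : 2 * m = ∑ i : Fin r, x i * (x i + 1) := by
    rw [hm, Finset.mul_sum]
    refine Finset.sum_congr rfl fun i _ => ?_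
    exact Nat.mul_div_cancel' (Nat.even_mul_succ_self (x i)).two_dvd
  omega
end

section
/- For every n ≥ 2, the star S_n = K_{1,n−1} (one center adjacent to n−1 pairwise non-adjacent leaves) satisfies ρ(S_n) = n(n−1)/2 + 1. -/
open Finset


lemma claim (t : ℕ) : ∀ (V : Type) [Fintype V] (G : SimpleGraph V), Fintype.card V ≤ (t+1)*t/2 →
    ∃ c : V → ℕ, (∀ u v, G.Adj u v → c u ≠ c v) ∧
      (∀ s : Finset V, s.card = t+1 → (∀ x ∈ s, ∀ y ∈ s, x ≠ y → ¬ G.Adj x y) → ¬ Set.InjOn c s) ∧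
      (∀ (v : V) (s : Finset V), s.card = t → (∀ x ∈ s, G.Adj v x) →
        (∀ x ∈ s, ∀ y ∈ s, x ≠ y → ¬ G.Adj x y) → ¬ Set.InjOn c s) := by
  induction t with
  | zero =>
    intro V _ G hcard
    simp only [Nat.mul_zero, Nat.zero_div, Nat.le_zero] at hcard
    have hV : IsEmpty V := Fintype.card_eq_zero_iff.mp hcard
    refine ⟨fun _ => 0, fun u => isEmptyElim u, ?_, fun v => isEmptyElim v⟩
    intro s hs _ _
    obtain ⟨x, _⟩ := Finset.card_pos.mp (by omega : 0 < s.card)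
    exact isEmptyElim x
  | succ t IH =>
    intro V _ G hcard
    classical
    by_cases hind : ∃ I : Finset V, I.card = t+1 ∧ ∀ x ∈ I, ∀ y ∈ I, x ≠ y → ¬ G.Adj x y
    · obtain ⟨I, hIcard, hInadj⟩ := hind
      set V' := {x : V // x ∉ I} with hV'
      set G' : SimpleGraph V' := G.comap Subtype.val with hG'
      have hadj' : ∀ a b : V', G'.Adj a b ↔ G.Adj a.1 b.1 := fun a b => Iff.rfl
      have hcard' : Fintype.card V' ≤ (t+1)*t/2 := by
        have h1 : Fintype.card V' = Fintype.card V - Fintype.card {x : V // x ∈ I} :=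
          Fintype.card_subtype_compl _
        have h2 : Fintype.card {x : V // x ∈ I} = t + 1 := by
          rw [Fintype.card_coe]; exact hIcard
        have h3 : (t+2)*(t+1)/2 = (t+1)*t/2 + (t+1) := by
          have : (t+2)*(t+1) = (t+1)*t + (t+1)*2 := by ring
          rw [this, Nat.add_mul_div_right _ _ (by norm_num : 0 < 2)]
        have he : (t + 1 + 1) * (t + 1) = (t+2)*(t+1) := by ring
        rw [he] at hcard
        omega
      obtain ⟨c', hc'prop, hc'RI, hc'CRI⟩ := IH V' G' hcard'
      refine ⟨fun v => if h : v ∈ I then 0 else c' ⟨v, h⟩ + 1, ?_, ?_, ?_⟩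
      · intro u v huv
        by_cases hu : u ∈ I <;> by_cases hv : v ∈ I <;> simp only [dif_pos, dif_neg, hu, hv]
        · exact absurd huv (hInadj u hu v hv (G.ne_of_adj huv))
        · simp
        · simp
        · simpa using fun h => hc'prop ⟨u, hu⟩ ⟨v, hv⟩ huv (by omega)
      · -- no rainbow independent (t+2)-set
        intro s hs hnadj hinj
        -- at most one element of s in I
        have hone : (s ∩ I).card ≤ 1 := by
          refine Finset.card_le_one.mpr ?_
          intro a ha b hb
          simp only [Finset.mem_inter] at ha hb
          by_contra hne
          have := hinj (Finset.mem_coe.mpr ha.1) (Finset.mem_coe.mpr hb.1)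
            (by simp [dif_pos ha.2, dif_pos hb.2])
          exact hne this
        have hdiff : t + 1 ≤ (s \ I).card := by
          have := Finset.card_sdiff_add_card_inter s I
          omega
        obtain ⟨s₃, hs₃sub, hs₃card⟩ := Finset.exists_subset_card_eq hdiff
        have hs₃s : s₃ ⊆ s := hs₃sub.trans (Finset.sdiff_subset)
        have hs₃I : ∀ x ∈ s₃, x ∉ I := fun x hx => (Finset.mem_sdiff.mp (hs₃sub hx)).2
        -- build finset in V'
        set s' : Finset V' := s₃.subtype (· ∉ I) with hs'
        have hs'card : s'.card = t + 1 := by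
          rw [Finset.card_subtype, Finset.filter_true_of_mem hs₃I, hs₃card]
        refine hc'RI s' hs'card ?_ ?_
        · rintro ⟨x, hx⟩ hxs ⟨y, hy⟩ hys hne
          rw [Finset.mem_subtype] at hxs hys
          exact hnadj x (hs₃s hxs) y (hs₃s hys) (fun h => hne (Subtype.ext h))
        · rintro ⟨x, hx⟩ hxs ⟨y, hy⟩ hys hcxy
          rw [Finset.mem_coe, Finset.mem_subtype] at hxs hys
          have : (if h : x ∈ I then 0 else c' ⟨x, h⟩ + 1) = (if h : y ∈ I then 0 else c' ⟨y, h⟩ + 1) := by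
            rw [dif_neg hx, dif_neg hy]; omega
          exact Subtype.ext (hinj (Finset.mem_coe.mpr (hs₃s hxs)) (Finset.mem_coe.mpr (hs₃s hys)) this)
      · -- no coned rainbow independent (t+1)-set
        intro v s hs hadjv hnadj hinj
        by_cases hsI : ∃ u, u ∈ s ∩ I
        · obtain ⟨u, hu⟩ := hsI
          rw [Finset.mem_inter] at hu
          have hvI : v ∉ I := by
            intro hv
            exact hInadj v hv u hu.2 (G.ne_of_adj (hadjv u hu.1)) (hadjv u hu.1)
          set s₂ := s.erase u with hs₂
          have hs₂card : s₂.card = t := by rw [Finset.card_erase_of_mem hu.1]; omega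
          have hs₂I : ∀ x ∈ s₂, x ∉ I := by
            intro x hx hxI
            have hxs := Finset.mem_of_mem_erase hx
            have hxu := Finset.ne_of_mem_erase hx
            exact hxu (hinj (Finset.mem_coe.mpr hxs) (Finset.mem_coe.mpr hu.1)
              (by simp [dif_pos hxI, dif_pos hu.2]))
          set s' : Finset V' := s₂.subtype (· ∉ I) with hs'
          have hs'card : s'.card = t := by
            rw [Finset.card_subtype, Finset.filter_true_of_mem hs₂I, hs₂card]
          refine hc'CRI ⟨v, hvI⟩ s' hs'card ?_ ?_ ?_
          · rintro ⟨x, hx⟩ hxs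
            rw [Finset.mem_subtype] at hxs
            exact hadjv x (Finset.mem_of_mem_erase hxs)
          · rintro ⟨x, hx⟩ hxs ⟨y, hy⟩ hys hne
            rw [Finset.mem_subtype] at hxs hys
            exact hnadj x (Finset.mem_of_mem_erase hxs) y (Finset.mem_of_mem_erase hys)
              (fun h => hne (Subtype.ext h))
          · rintro ⟨x, hx⟩ hxs ⟨y, hy⟩ hys hcxy
            rw [Finset.mem_coe, Finset.mem_subtype] at hxs hys
            have : (if h : x ∈ I then 0 else c' ⟨x, h⟩ + 1) = (if h : y ∈ I then 0 else c' ⟨y, h⟩ + 1) := by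
              rw [dif_neg hx, dif_neg hy]; omega
            exact Subtype.ext (hinj (Finset.mem_coe.mpr (Finset.mem_of_mem_erase hxs))
              (Finset.mem_coe.mpr (Finset.mem_of_mem_erase hys)) this)
        · push_neg at hsI
          have hsI' : ∀ x ∈ s, x ∉ I := fun x hx hxI => hsI x (Finset.mem_inter.mpr ⟨hx, hxI⟩)
          set s' : Finset V' := s.subtype (· ∉ I) with hs'
          have hs'card : s'.card = t + 1 := by
            rw [Finset.card_subtype, Finset.filter_true_of_mem hsI', hs]
          refine hc'RI s' hs'card ?_ ?_
          · rintro ⟨x, hx⟩ hxs ⟨y, hy⟩ hys hne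
            rw [Finset.mem_subtype] at hxs hys
            exact hnadj x hxs y hys (fun h => hne (Subtype.ext h))
          · rintro ⟨x, hx⟩ hxs ⟨y, hy⟩ hys hcxy
            rw [Finset.mem_coe, Finset.mem_subtype] at hxs hys
            have : (if h : x ∈ I then 0 else c' ⟨x, h⟩ + 1) = (if h : y ∈ I then 0 else c' ⟨y, h⟩ + 1) := by
              rw [dif_neg hx, dif_neg hy]; omega
            exact Subtype.ext (hinj (Finset.mem_coe.mpr hxs) (Finset.mem_coe.mpr hys) this)
    · -- no independent (t+1)-set: use injective coloring
      refine ⟨fun v => (Fintype.equivFin V v : ℕ), ?_, ?_, ?_⟩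
      · intro u v huv h
        exact G.ne_of_adj huv (by
          have : Fintype.equivFin V u = Fintype.equivFin V v := Fin.val_injective h
          exact (Fintype.equivFin V).injective this)
      · intro s hs hnadj _
        obtain ⟨s', hs'sub, hs'card⟩ := Finset.exists_subset_card_eq (by omega : t+1 ≤ s.card)
        exact hind ⟨s', hs'card, fun x hx y hy hne => hnadj x (hs'sub hx) y (hs'sub hy) hne⟩
      · intro v s hs hadjv hnadj _
        exact hind ⟨s, hs, hnadj⟩



-- greedy system of distinct representatives from cliques of sizes 1,...,m
lemma sdr (m : ℕ) : ∀ (d : (j : Fin m) → Fin (j.1+1) → ℕ), (∀ j, Function.Injective (d j)) →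
    ∃ x : (j : Fin m) → Fin (j.1+1), Function.Injective (fun j => d j (x j)) := by
  induction m with
  | zero => intro d _; exact ⟨fun j => j.elim0, fun j => j.elim0⟩
  | succ m IH =>
    intro d hd
    obtain ⟨x', hx'⟩ := IH (fun j a => d j.castSucc a) (fun j => hd j.castSucc)
    classical
    set used : Finset ℕ := Finset.image (fun j : Fin m => d j.castSucc (x' j)) Finset.univ with hused
    have husedcard : used.card ≤ m := le_trans (Finset.card_image_le) (by simp)
    have hlastcard : (Finset.image (d (Fin.last m)) Finset.univ).card = m + 1 := by
      rw [Finset.card_image_of_injective _ (hd (Fin.last m))]; simp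
    have hnotsub : ¬ (Finset.image (d (Fin.last m)) Finset.univ) ⊆ used := by
      intro hsub
      have := Finset.card_le_card hsub
      omega
    obtain ⟨b, hbmem, hbnot⟩ := Finset.not_subset.mp hnotsub
    obtain ⟨a, _, ha⟩ := Finset.mem_image.mp hbmem
    refine ⟨Fin.lastCases a x', ?_⟩
    have key : ∀ j : Fin m, d j.castSucc (x' j) ≠ b := by
      intro j h
      exact hbnot (h ▸ Finset.mem_image.mpr ⟨j, Finset.mem_univ j, rfl⟩)
    intro i j hij
    simp only at hij
    induction i using Fin.lastCases with
    | last =>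
      induction j using Fin.lastCases with
      | last => rfl
      | cast j =>
        exfalso
        rw [Fin.lastCases_last, Fin.lastCases_castSucc] at hij
        exact key j (by rw [← hij]; exact ha)
    | cast i =>
      induction j using Fin.lastCases with
      | last =>
        exfalso
        rw [Fin.lastCases_last, Fin.lastCases_castSucc] at hij
        exact key i (by rw [hij]; exact ha)
      | cast j =>
        rw [Fin.lastCases_castSucc, Fin.lastCases_castSucc] at hij
        exact congrArg Fin.castSucc (hx' hij)



lemma sdr' (m : ℕ) (d : (j : Fin m) → Fin (j.1+1) → ℕ) (hd : ∀ j, Function.Injective (d j)) :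
    ∃ x : (j : Fin m) → Fin (j.1+1), Function.Injective (fun j => d j (x j)) := sdr m d hd

/-- apex joined to disjoint cliques of sizes 1,...,m -/
def Gstar (m : ℕ) : SimpleGraph (Option (Σ j : Fin m, Fin (j.1+1))) where
  Adj u v := match u, v with
    | none, none => False
    | none, some _ => True
    | some _, none => True
    | some x, some y => x.1 = y.1 ∧ x ≠ y
  symm := by
    constructor
    rintro (_|x) (_|y) h
    · exact h
    · exact trivial
    · exact trivial
    · exact ⟨h.1.symm, Ne.symm h.2⟩
  loopless := by
    constructor
    rintro (_|x) h
    · exact h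
    · exact h.2 rfl

lemma gstar_adj_some (m : ℕ) (x y : Σ j : Fin m, Fin (j.1+1)) :
    (Gstar m).Adj (some x) (some y) ↔ x.1 = y.1 ∧ x ≠ y := Iff.rfl

lemma gstar_adj_none (m : ℕ) (x : Σ j : Fin m, Fin (j.1+1)) :
    (Gstar m).Adj none (some x) := trivial

lemma arrows_gstar (m : ℕ) : ArrowsR (Gstar m) (completeBipartiteGraph (Fin 1) (Fin m)) := by
  intro c hc
  set d : (j : Fin m) → Fin (j.1+1) → ℕ := fun j a => c (some ⟨j, a⟩) with hd
  have hdinj : ∀ j, Function.Injective (d j) := by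
    intro j a a' h
    by_contra hne
    exact hc (some ⟨j, a⟩) (some ⟨j, a'⟩)
      ⟨rfl, fun hs => hne (eq_of_heq (Sigma.mk.inj_iff.mp hs).2)⟩ h
  obtain ⟨x, hx⟩ := sdr' m d hdinj
  set f : (Fin 1 ⊕ Fin m) → Option (Σ j : Fin m, Fin (j.1+1)) :=
    Sum.elim (fun _ => none) (fun j => some ⟨j, x j⟩) with hf
  have finj : Function.Injective f := by
    rintro (a|a) (b|b) h
    · rw [Subsingleton.elim a b]
    · simp [hf] at h
    · simp [hf] at h
    · simp only [hf, Sum.elim_inr, Option.some.injEq] at h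
      exact congrArg Sum.inr (Sigma.mk.inj_iff.mp h).1
  refine ⟨⟨⟨f, finj⟩, ?_⟩, ?_⟩
  · rintro (a|a) (b|b) <;>
      simp only [hf, Function.Embedding.coeFn_mk, Sum.elim_inl, Sum.elim_inr,
        completeBipartiteGraph_adj, Sum.isLeft_inl, Sum.isRight_inr, Sum.isLeft_inr,
        Sum.isRight_inl]
    · constructor
      · intro h; exact h.elim  -- none-none
      · simp
    · constructor
      · intro _; simp
      · intro _; exact trivial
    · constructor
      · intro _; simp
      · intro _; exact trivial
    · constructor
      · rintro ⟨h1, h2⟩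
        exfalso
        have : a = b := by simpa using h1
        subst this
        exact h2 rfl
      · simp
  · rintro (a|a) (b|b) h <;> simp only [Function.Embedding.coeFn_mk, hf, Sum.elim_inl,
      Sum.elim_inr] at h
    · rw [Subsingleton.elim a b]
    · exact absurd h (hc _ _ (gstar_adj_none m _))
    · exact absurd h.symm (hc _ _ (gstar_adj_none m _))
    · exact congrArg Sum.inr (hx h)

lemma card_gstar (m : ℕ) :
    Fintype.card (Option (Σ j : Fin m, Fin (j.1+1))) = m * (m-1) / 2 + m + 1 := by
  rw [Fintype.card_option, Fintype.card_sigma]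
  have : ∑ j : Fin m, Fintype.card (Fin (j.1+1)) = ∑ j ∈ Finset.range m, (j+1) := by
    simp [Fin.sum_univ_eq_sum_range (fun j => j + 1) m]
  rw [this, Finset.sum_add_distrib, Finset.sum_range_id]
  simp [Finset.sum_const]

lemma arrowsR_transfer {α β γ : Type} (e : α ≃ β) (G : SimpleGraph α) (H : SimpleGraph γ)
    (h : ArrowsR G H) : ArrowsR (G.comap e.symm) H := by
  intro c hc
  obtain ⟨f, hf⟩ := h (c ∘ e) (by
    intro u v huv
    apply hc
    show G.Adj (e.symm (e u)) (e.symm (e v))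
    simpa using huv)
  refine ⟨SimpleGraph.Embedding.comp ⟨⟨e, e.injective⟩, ?_⟩ f, hf⟩
  intro a b
  show G.Adj (e.symm (e a)) (e.symm (e b)) ↔ G.Adj a b
  simp


/-- For the star `S_n = K_{1,n−1}` with `n ≥ 2`: `ρ(S_n) = n(n−1)/2 + 1`. -/
theorem stmt10 (n : ℕ) (hn : 2 ≤ n) :
    rho (completeBipartiteGraph (Fin 1) (Fin (n - 1))) = n * (n - 1) / 2 + 1 := by
  obtain ⟨k, rfl⟩ : ∃ k, n = k + 2 := ⟨n - 2, by omega⟩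
  set N : ℕ := (k+2) * (k+2-1) / 2 with hN
  have hNval : N = (k+2)*(k+1)/2 := rfl
  have hdiv : (k+2)*(k+1)/2 = (k+1)*k/2 + (k+1) := by
    have h : (k+2)*(k+1) = (k+1)*k + (k+1)*2 := by ring
    rw [h, Nat.add_mul_div_right _ _ (by norm_num : 0 < 2)]
  have hm1 : k + 2 - 1 = k + 1 := rfl
  -- membership : N + 1 is achievable
  have hcardG : Fintype.card (Option (Σ j : Fin (k+1), Fin (j.1+1))) = N + 1 := by
    rw [card_gstar, hNval, hdiv]
    norm_num
  have hmem : (N + 1) ∈ {m : ℕ | ∃ G : SimpleGraph (Fin m),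
      ArrowsR G (completeBipartiteGraph (Fin 1) (Fin (k+2-1)))} := by
    refine ⟨(Gstar (k+1)).comap (Fintype.equivFinOfCardEq hcardG).symm, ?_⟩
    have := arrowsR_transfer (Fintype.equivFinOfCardEq hcardG) (Gstar (k+1))
      (completeBipartiteGraph (Fin 1) (Fin (k+1))) (arrows_gstar (k+1))
    exact this
  -- lower bound
  have hlb : ∀ m ∈ {m : ℕ | ∃ G : SimpleGraph (Fin m),
      ArrowsR G (completeBipartiteGraph (Fin 1) (Fin (k+2-1)))}, N + 1 ≤ m := by
    intro m hm
    obtain ⟨G, hG⟩ := hm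
    by_contra hlt
    have hmN : m ≤ N := by omega
    have hcards : Fintype.card (Fin m) ≤ ((k+1)+1)*(k+1)/2 := by
      rw [Fintype.card_fin]
      have : ((k+1)+1)*(k+1)/2 = N := by rw [hNval]
      omega
    obtain ⟨c, hcprop, _, hcCRI⟩ := claim (k+1) (Fin m) G hcards
    obtain ⟨f, hf⟩ := hG c hcprop
    classical
    set g : Fin (k+1) → Fin m := fun j => f (Sum.inr j) with hg
    have hginj : Function.Injective g := by
      intro a b h
      have := f.injective h
      simpa using this
    set s : Finset (Fin m) := Finset.image g Finset.univ with hs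
    have hscard : s.card = k + 1 := by
      rw [hs, Finset.card_image_of_injective _ hginj, Finset.card_univ, Fintype.card_fin]
    refine hcCRI (f (Sum.inl 0)) s hscard ?_ ?_ ?_
    · intro x hx
      obtain ⟨j, _, rfl⟩ := Finset.mem_image.mp hx
      exact f.map_adj_iff.mpr (by simp)
    · intro x hx y hy hne
      obtain ⟨j, _, rfl⟩ := Finset.mem_image.mp hx
      obtain ⟨j', _, rfl⟩ := Finset.mem_image.mp hy
      intro hadj
      have := f.map_adj_iff.mp hadj
      simp at this
    · intro x hx y hy hcxy
      rw [Finset.mem_coe] at hx hy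
      obtain ⟨j, _, rfl⟩ := Finset.mem_image.mp hx
      obtain ⟨j', _, rfl⟩ := Finset.mem_image.mp hy
      have : (Sum.inr j : Fin 1 ⊕ Fin (k+1)) = Sum.inr j' := hf hcxy
      exact congrArg (fun z => f z) this
  rw [rho]
  exact le_antisymm (Nat.sInf_le hmem) (le_csInf ⟨N+1, hmem⟩ hlb)
end

section
/- Let H be a finite simple graph on n vertices whose vertex set is partitioned into cliques C_1, C_2, …, C_s such that any two vertices in the same clique C_i are adjacent in H and have exactly the same neighbors outside C_i (replication cliques). For each i, let n_i be the number of vertices in C_1 ∪ … ∪ C_{i−1} that are non-adjacent to the vertices of C_i (this number is the same for every vertex of C_i). Then ρ(H) ≤ n + Σ_{i=1}^{s} n_i. -/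
open Classical in
/-- Per-clique chosen slots. -/
noncomputable def pick (s : ℕ) (cs ns : Fin s → ℕ) (R : Fin s → Fin s → Prop)
    (col : (Σ j : Fin s, Fin (cs j + ns j)) → ℕ) : (i : Fin s) → Finset (Fin (cs i + ns i)) :=
  fun i =>
  ((Finset.univ.filter fun a : Fin (cs i + ns i) => col ⟨i, a⟩ ∉
      Finset.univ.biUnion fun j : Fin s =>
        if h : j < i ∧ ¬ R j i then
          (pick s cs ns R col j).image fun b => col ⟨j, b⟩
        else ∅).toList.take (cs i)).toFinset
termination_by i => i.val
decreasing_by all_goals exact Fin.lt_iff_val_lt_val.mp h.1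

open Classical in
noncomputable def ForbSet (s : ℕ) (cs ns : Fin s → ℕ) (R : Fin s → Fin s → Prop)
    (col : (Σ j : Fin s, Fin (cs j + ns j)) → ℕ) (i : Fin s) : Finset ℕ :=
  Finset.univ.biUnion fun j : Fin s =>
    if j < i ∧ ¬ R j i then (pick s cs ns R col j).image (fun b => col ⟨j, b⟩) else ∅

open Classical in
theorem pick_eq (s : ℕ) (cs ns : Fin s → ℕ) (R : Fin s → Fin s → Prop)
    (col : (Σ j : Fin s, Fin (cs j + ns j)) → ℕ) (i : Fin s) :
    pick s cs ns R col i =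
      ((Finset.univ.filter fun a : Fin (cs i + ns i) =>
        col ⟨i, a⟩ ∉ ForbSet s cs ns R col i).toList.take (cs i)).toFinset := by
  rw [pick, ForbSet]
  congr 1


/-- Replication-clique upper bound: if `V(H)` is partitioned into replication cliques
`C_1, …, C_s` (fibers of `P`), and `nn i` is the number of vertices in earlier cliques
non-adjacent to the vertices of `C_i`, then `ρ(H) ≤ n + Σ_i nn i`. -/
theorem stmt11 {V : Type} [Fintype V] [DecidableEq V]
    (H : SimpleGraph V) [DecidableRel H.Adj]
    (s : ℕ) (P : V → Fin s) (hsurj : Function.Surjective P)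
    (hclique : ∀ v w : V, v ≠ w → P v = P w → H.Adj v w)
    (hrepl : ∀ v w u : V, P v = P w → P u ≠ P v → (H.Adj v u ↔ H.Adj w u))
    (nn : Fin s → ℕ)
    (hnn : ∀ (i : Fin s) (v : V), P v = i →
      nn i = (Finset.univ.filter fun u => P u < i ∧ ¬ H.Adj u v).card) :
    rho H ≤ Fintype.card V + ∑ i : Fin s, nn i := by
  classical
  set cs : Fin s → ℕ := fun i => (Finset.univ.filter fun v => P v = i).card with hcs
  set R : Fin s → Fin s → Prop := fun i j => ∃ v w : V, P v = i ∧ P w = j ∧ H.Adj v w with hR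
  have hRsymm : ∀ i j, R i j → R j i := by
    rintro i j ⟨v, w, hv, hw, h⟩; exact ⟨w, v, hw, hv, h.symm⟩
  have hRchar : ∀ (v w : V), P v ≠ P w → (R (P v) (P w) ↔ H.Adj v w) := by
    intro v w hne
    constructor
    · rintro ⟨v', w', hv', hw', h⟩
      have h1 : H.Adj v w' := (hrepl v' v w' hv' (by rw [hw', hv']; exact hne.symm)).mp h
      exact ((hrepl w' w v hw' (by rw [hw']; exact hne)).mp h1.symm).symm
    · intro h; exact ⟨v, w, rfl, rfl, h⟩
  set W := (Σ i : Fin s, Fin (cs i + nn i)) with hW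
  set G : SimpleGraph W := {
    Adj := fun x y => (x.1 = y.1 ∧ x ≠ y) ∨ (x.1 ≠ y.1 ∧ R x.1 y.1)
    symm := by
      refine ⟨?_⟩; rintro x y (⟨h1, h2⟩ | ⟨h1, h2⟩)
      · exact Or.inl ⟨h1.symm, h2.symm⟩
      · exact Or.inr ⟨h1.symm, hRsymm _ _ h2⟩
    loopless := by refine ⟨?_⟩; rintro x (⟨_, h⟩ | ⟨h, _⟩) <;> exact h rfl } with hG
  have hcardW : Fintype.card W = Fintype.card V + ∑ i, nn i := by
    have h1 : Fintype.card W = ∑ i : Fin s, (cs i + nn i) := by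
      simp [hW, Fintype.card_sigma]
    have h2 : ∑ i : Fin s, cs i = Fintype.card V := by
      rw [← Finset.card_univ,
        Finset.card_eq_sum_card_fiberwise (f := P) (t := Finset.univ) (fun x _ => Finset.mem_univ _)]
    rw [h1, Finset.sum_add_distrib, h2]
  set N := Fintype.card V + ∑ i : Fin s, nn i with hN
  set ee : W ≃ Fin N := Fintype.equivFinOfCardEq hcardW with hee
  have hmem : N ∈ {m : ℕ | ∃ G : SimpleGraph (Fin m), ArrowsR G H} := by
    refine ⟨SimpleGraph.comap (ee.symm) G, ?_⟩
    intro c' hc'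
    set col : W → ℕ := fun x => c' (ee x) with hcoldef
    have hcol : ∀ x y : W, G.Adj x y → col x ≠ col y := by
      intro x y h
      apply hc'
      simpa using h
    set pk := pick s cs nn R col with hpk
    set F := ForbSet s cs nn R col with hF
    have hpicksub : ∀ i, pk i ⊆ Finset.univ.filter fun a => col ⟨i, a⟩ ∉ F i := by
      intro i a ha
      rw [hpk, pick_eq] at ha
      exact Finset.mem_toList.mp ((List.take_sublist _ _).mem (List.mem_toFinset.mp ha))
    have hpickcard_le : ∀ i, (pk i).card ≤ cs i := by
      intro i
      rw [hpk, pick_eq]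
      exact (List.toFinset_card_le _).trans (List.length_take.le.trans (min_le_left _ _))
    have hcliquecol : ∀ (i : Fin s) (a b : Fin (cs i + nn i)),
        a ≠ b → col ⟨i, a⟩ ≠ col ⟨i, b⟩ := by
      intro i a b hab
      refine hcol _ _ (Or.inl ⟨rfl, ?_⟩)
      intro h
      exact hab (eq_of_heq (Sigma.mk.inj_iff.mp h).2)
    have hFcard : ∀ i, (F i).card ≤ nn i := by
      intro i
      obtain ⟨v, hv⟩ := hsurj i
      have c1 : (F i).card ≤ ∑ j ∈ Finset.univ.filter (fun j => j < i ∧ ¬ R j i), cs j := by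
        rw [hF, ForbSet]
        refine Finset.card_biUnion_le.trans ?_
        rw [Finset.sum_filter]
        refine Finset.sum_le_sum fun j _ => ?_
        by_cases h : j < i ∧ ¬ R j i
        · rw [if_pos h, if_pos h]
          exact Finset.card_image_le.trans (hpickcard_le j)
        · rw [if_neg h, if_neg h]; simp
      have c4 : ∑ j ∈ Finset.univ.filter (fun j => j < i ∧ ¬ R j i), cs j =
          (Finset.univ.filter fun u : V => P u < i ∧ ¬ R (P u) i).card := by
        rw [Finset.card_eq_sum_card_fiberwise
          (f := P) (t := Finset.univ.filter (fun j => j < i ∧ ¬ R j i))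
          (fun u hu => by
            simp only [Finset.mem_coe, Finset.coe_filter, Finset.coe_univ, Set.mem_univ, Set.mem_setOf_eq, Finset.mem_filter, Finset.mem_univ, true_and] at hu ⊢
            exact hu)]
        refine Finset.sum_congr rfl ?_
        intro j hj
        simp only [Finset.mem_filter, Finset.mem_univ, true_and] at hj
        rw [hcs]
        refine congrArg Finset.card ?_
        ext u
        simp only [Finset.mem_filter, Finset.mem_univ, true_and]
        constructor
        · intro h; exact ⟨by rw [h]; exact hj, h⟩
        · intro h; exact h.2
      have c5 : (Finset.univ.filter fun u : V => P u < i ∧ ¬ R (P u) i).card =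
          (Finset.univ.filter fun u : V => P u < i ∧ ¬ H.Adj u v).card := by
        refine congrArg Finset.card ?_
        ext u
        simp only [Finset.mem_filter, Finset.mem_univ, true_and]
        constructor
        · rintro ⟨h1, h2⟩
          refine ⟨h1, fun hadj => h2 ?_⟩
          rw [← hv]
          exact (hRchar u v (by rw [hv]; exact h1.ne)).mpr hadj
        · rintro ⟨h1, h2⟩
          refine ⟨h1, fun hr => h2 ?_⟩
          exact (hRchar u v (by rw [hv]; exact h1.ne)).mp (by rwa [hv])
      calc (F i).card ≤ _ := c1
        _ = _ := c4
        _ = _ := c5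
        _ = nn i := (hnn i v hv).symm
    have havail : ∀ i, cs i ≤ (Finset.univ.filter fun a : Fin (cs i + nn i) =>
        col ⟨i, a⟩ ∉ F i).card := by
      intro i
      have hBsub : (Finset.univ.filter fun a : Fin (cs i + nn i) => col ⟨i, a⟩ ∈ F i).card ≤
          (F i).card := by
        apply Finset.card_le_card_of_injOn (fun a => col ⟨i, a⟩)
        · intro a ha; exact (Finset.mem_filter.mp ha).2
        · intro a _ b _ hab
          by_contra hne
          exact hcliquecol i a b hne hab
      have heq : (Finset.univ.filter fun a : Fin (cs i + nn i) => col ⟨i, a⟩ ∉ F i) =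
          Finset.univ \ (Finset.univ.filter fun a => col ⟨i, a⟩ ∈ F i) :=
        Finset.filter_not _ _
      have hcardeq := Finset.card_sdiff_of_subset
        (Finset.filter_subset (fun a : Fin (cs i + nn i) => col ⟨i, a⟩ ∈ F i) Finset.univ)
      rw [heq, hcardeq]
      have : (Finset.univ : Finset (Fin (cs i + nn i))).card = cs i + nn i := by simp
      have := hFcard i
      omega
    have hpickcard : ∀ i, (pk i).card = cs i := by
      intro i
      rw [hpk, pick_eq]
      have hnd : ((Finset.univ.filter fun a : Fin (cs i + nn i) =>
          col ⟨i, a⟩ ∉ ForbSet s cs nn R col i).toList.take (cs i)).Nodup :=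
        (Finset.nodup_toList _).sublist (List.take_sublist _ _)
      rw [List.toFinset_card_of_nodup hnd, List.length_take, Finset.length_toList]
      exact min_eq_left (havail i)
    have ecard : ∀ i : Fin s, Fintype.card {v : V // P v = i} = Fintype.card {a // a ∈ pk i} := by
      intro i
      rw [Fintype.card_subtype, Fintype.card_coe, hpickcard i]
    set e : ∀ i : Fin s, {v : V // P v = i} ≃ {a // a ∈ pk i} :=
      fun i => Fintype.equivOfCardEq (ecard i) with he
    set f : V → W := fun v => ⟨P v, (e (P v) ⟨v, rfl⟩).1⟩ with hf
    have hfnorm : ∀ (v : V) (i : Fin s) (hv : P v = i), f v = ⟨i, ((e i) ⟨v, hv⟩).1⟩ := by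
      intro v i hv
      subst hv
      rfl
    have hfinj : Function.Injective f := by
      intro v w h
      have h1 : P v = P w := congrArg Sigma.fst h
      rw [hfnorm v (P v) rfl, hfnorm w (P v) h1.symm] at h
      have h2 := eq_of_heq (Sigma.mk.inj_iff.mp h).2
      have h3 := (e (P v)).injective (Subtype.ext h2)
      exact congrArg Subtype.val h3
    have hfmem : ∀ v, (f v).2 ∈ pk (P v) := fun v => (e (P v) ⟨v, rfl⟩).2
    have hGAdj : ∀ v w : V, G.Adj (f v) (f w) ↔ H.Adj v w := by
      intro v w
      constructor
      · rintro (⟨h1, h2⟩ | ⟨h1, h2⟩)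
        · exact hclique v w (fun he' => h2 (by rw [he'])) h1
        · exact (hRchar v w h1).mp h2
      · intro h
        by_cases hpq : P v = P w
        · exact Or.inl ⟨hpq, fun he' => h.ne (hfinj he')⟩
        · exact Or.inr ⟨hpq, ⟨v, w, rfl, rfl, h⟩⟩
    have hkey : ∀ v w : V, P v < P w → ¬ R (P v) (P w) → col (f v) ≠ col (f w) := by
      intro v w hlt hnR heq
      have hmemF : col (f v) ∈ F (P w) := by
        rw [hF, ForbSet]
        refine Finset.mem_biUnion.mpr ⟨P v, Finset.mem_univ _, ?_⟩
        rw [if_pos ⟨hlt, hnR⟩]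
        exact Finset.mem_image.mpr ⟨(f v).2, hfmem v, rfl⟩
      have hnot : col (f w) ∉ F (P w) := by
        have h1 := hpicksub (P w) (hfmem w)
        exact (Finset.mem_filter.mp h1).2
      rw [heq] at hmemF
      exact hnot hmemF
    have hrain : ∀ v w : V, v ≠ w → col (f v) ≠ col (f w) := by
      intro v w hvw heq
      by_cases hadj : G.Adj (f v) (f w)
      · exact hcol _ _ hadj heq
      · have h1 : P v ≠ P w := by
          intro h
          exact hadj (Or.inl ⟨h, fun he' => hvw (hfinj he')⟩)
        have hnR : ¬ R (P v) (P w) := fun hr => hadj (Or.inr ⟨h1, hr⟩)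
        rcases lt_or_gt_of_ne h1 with hlt | hgt
        · exact hkey v w hlt hnR heq
        · exact hkey w v hgt (fun hr => hnR (hRsymm _ _ hr)) heq.symm
    refine ⟨⟨⟨fun v => ee (f v), fun v w h => hfinj (ee.injective h)⟩, ?_⟩, ?_⟩
    · intro v w
      simp only [SimpleGraph.comap_adj, Function.Embedding.coeFn_mk, Equiv.symm_apply_apply]
      change G.Adj (ee.symm (ee (f v))) (ee.symm (ee (f w))) ↔ H.Adj v w
      rw [Equiv.symm_apply_apply, Equiv.symm_apply_apply]; exact hGAdj v w
    · intro v w h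
      by_contra hne
      exact hrain v w hne h
  exact Nat.sInf_le hmem
end

section
/- Let H be the disjoint union of s cliques of sizes y_1 ≥ y_2 ≥ … ≥ y_s ≥ 1. Then ρ(H) = Σ_{i=1}^{s} i·y_i. -/
namespace Stmt12

lemma arrowsR_of_iso {α β γ : Type} {G : SimpleGraph α} {G' : SimpleGraph β}
    {H : SimpleGraph γ} (e : G ≃g G') (h : ArrowsR G H) : ArrowsR G' H := by
  intro c hc
  obtain ⟨f, hf⟩ := h (fun a => c (e a)) (fun u v huv => hc _ _ (e.map_adj_iff.2 huv))
  exact ⟨e.toEmbedding.comp f, hf⟩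


abbrev CG {s : ℕ} (f : Fin s → ℕ) : SimpleGraph (Σ i : Fin s, Fin (f i)) :=
  (SimpleGraph.completeMultipartiteGraph fun i => Fin (f i))ᶜ

lemma cg_adj {s : ℕ} (f : Fin s → ℕ) (a b : Σ i : Fin s, Fin (f i)) :
    (CG f).Adj a b ↔ a.1 = b.1 ∧ a ≠ b := by
  simp only [CG, SimpleGraph.compl_adj, SimpleGraph.comap_adj, SimpleGraph.top_adj]
  tauto

lemma sig_mk_eq {s : ℕ} (f : Fin s → ℕ) (i : Fin s) (a b : Fin (f i)) :
    (⟨i, a⟩ : Σ i : Fin s, Fin (f i)) = ⟨i, b⟩ ↔ a = b := by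
  simp

def shiftFun {n : ℕ} (f : Fin (n+1) → ℕ) (a : Σ i : Fin n, Fin (f i.succ)) :
    Σ i : Fin (n+1), Fin (f i) := ⟨a.1.succ, a.2⟩

lemma shiftFun_injective {n : ℕ} (f : Fin (n+1) → ℕ) :
    Function.Injective (shiftFun f) := by
  rintro ⟨i, u⟩ ⟨j, v⟩ h
  simp only [shiftFun, Sigma.mk.inj_iff] at h
  obtain ⟨h1, h2⟩ := h
  have hij : i = j := Fin.succ_injective _ h1
  subst hij
  rw [eq_of_heq h2]

def shiftEmb {n : ℕ} (f : Fin (n+1) → ℕ) :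
    (CG (fun i : Fin n => f i.succ)) ↪g (CG f) where
  toFun := shiftFun f
  inj' := shiftFun_injective f
  map_rel_iff' := by
    intro a b
    rw [cg_adj, cg_adj]
    constructor
    · rintro ⟨h1, h2⟩
      refine ⟨Fin.succ_injective _ h1, fun hab => h2 (by rw [hab])⟩
    · rintro ⟨h1, h2⟩
      exact ⟨by simpa [shiftFun] using congrArg Fin.succ h1,
        fun hab => h2 (shiftFun_injective f hab)⟩


lemma arrows_cg : ∀ (s : ℕ) (y T : Fin s → ℕ),
    (∀ i, (∑ j, if i ≤ j then y j else 0) ≤ T i) →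
    ArrowsR (CG T) (CG y) := by
  intro s
  induction s with
  | zero =>
    intro y T _ c _
    refine ⟨⟨⟨fun a => a.1.elim0, fun a => a.1.elim0⟩, fun {a} => a.1.elim0⟩,
      fun a => a.1.elim0⟩
  | succ n ih =>
    intro y T hT c hc
    -- the tail coloring
    have hc' : ∀ u v, (CG (fun i : Fin n => T i.succ)).Adj u v →
        c (shiftEmb T u) ≠ c (shiftEmb T v) := by
      intro u v huv
      exact hc _ _ ((shiftEmb T).map_rel_iff.mpr huv)
    have hT' : ∀ i : Fin n, (∑ j, if i ≤ j then y j.succ else 0) ≤ T i.succ := by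
      intro i
      have := hT i.succ
      rw [Fin.sum_univ_succ] at this
      simp only [Fin.succ_le_succ_iff] at this
      simpa [(Fin.succ_ne_zero i)] using this
    obtain ⟨f', hf'⟩ := ih (fun i => y i.succ) (fun i => T i.succ) hT'
      (fun a => c (shiftEmb T a)) hc'
    -- the used colors
    set U : Finset ℕ :=
      Finset.univ.image (fun h : Σ i : Fin n, Fin (y i.succ) => c (shiftEmb T (f' h)))
      with hU
    have hUcard : U.card = ∑ i : Fin n, y i.succ := by
      rw [hU, Finset.card_image_of_injective _ hf', Finset.card_univ]
      simp [Fintype.card_sigma]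
    -- coloring is injective on part 0 (it is a clique)
    have hinj0 : Function.Injective (fun v : Fin (T 0) => c ⟨0, v⟩) := by
      intro u v huv
      by_contra hne
      refine hc ⟨0, u⟩ ⟨0, v⟩ ((cg_adj _ _ _).2 ⟨rfl, ?_⟩) huv
      simp only [ne_eq, Sigma.mk.inj_iff, heq_eq_eq]
      tauto
    -- the set of part-0 vertices with fresh colors
    set V0 : Finset (Fin (T 0)) := Finset.univ.filter (fun v => c ⟨0, v⟩ ∉ U) with hV0
    have hV0card : y 0 ≤ V0.card := by
      have hsplit : (Finset.univ.filter (fun v : Fin (T 0) => c ⟨0, v⟩ ∈ U)).card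
          + V0.card = T 0 := by
        rw [hV0]
        rw [Finset.card_filter_add_card_filter_not]
        simp
      have himg : (Finset.univ.filter (fun v : Fin (T 0) => c ⟨0, v⟩ ∈ U)).card ≤ U.card := by
        have : (Finset.univ.filter (fun v : Fin (T 0) => c ⟨0, v⟩ ∈ U)).image
            (fun v => c ⟨0, v⟩) ⊆ U := by
          intro x hx
          simp only [Finset.mem_image, Finset.mem_filter] at hx
          obtain ⟨v, ⟨_, hv⟩, rfl⟩ := hx
          exact hv
        calc (Finset.univ.filter (fun v : Fin (T 0) => c ⟨0, v⟩ ∈ U)).card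
            = ((Finset.univ.filter (fun v : Fin (T 0) => c ⟨0, v⟩ ∈ U)).image
              (fun v => c ⟨0, v⟩)).card := by
              rw [Finset.card_image_of_injective _ hinj0]
          _ ≤ U.card := Finset.card_le_card this
      have hT0 : y 0 + (∑ i : Fin n, y i.succ) ≤ T 0 := by
        have := hT 0
        rw [Fin.sum_univ_succ] at this
        simpa using this
      omega
    -- choose y 0 fresh vertices in part 0
    obtain ⟨g0⟩ : Nonempty (Fin (y 0) ↪ {v : Fin (T 0) // v ∈ V0}) := by
      apply Function.Embedding.nonempty_of_card_le
      simpa [Fintype.card_coe] using hV0card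
    -- assemble the embedding
    set F : (Σ i : Fin (n+1), Fin (y i)) → (Σ i : Fin (n+1), Fin (T i)) :=
      fun a => Fin.cases (motive := fun i => Fin (y i) → (Σ i : Fin (n+1), Fin (T i)))
        (fun v => ⟨0, (g0 v : Fin (T 0))⟩)
        (fun i v => shiftFun T (f' ⟨i, v⟩)) a.1 a.2 with hF
    have hF0 : ∀ v : Fin (y 0), F ⟨0, v⟩ = ⟨0, (g0 v : Fin (T 0))⟩ := by
      intro v; simp [hF]
    have hFs : ∀ (i : Fin n) (v : Fin (y i.succ)),
        F ⟨i.succ, v⟩ = shiftFun T (f' ⟨i, v⟩) := by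
      intro i v; simp [hF]
    -- injectivity of F
    have hg0c : Function.Injective (fun v : Fin (y 0) => (g0 v : Fin (T 0))) := by
      intro u v huv
      exact g0.injective (Subtype.ext huv)
    have hFinj : Function.Injective F := by
      rintro ⟨i, v⟩ ⟨j, w⟩ h
      rcases Fin.eq_zero_or_eq_succ i with rfl | ⟨i', rfl⟩ <;>
        rcases Fin.eq_zero_or_eq_succ j with rfl | ⟨j', rfl⟩
      · rw [hF0, hF0] at h
        simp only [Sigma.mk.inj_iff, heq_eq_eq, true_and] at h ⊢
        exact hg0c h
      · rw [hF0, hFs] at h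
        exact absurd (congrArg Sigma.fst h).symm (Fin.succ_ne_zero _)
      · rw [hFs, hF0] at h
        exact absurd (congrArg Sigma.fst h) (Fin.succ_ne_zero _)
      · rw [hFs, hFs] at h
        have h2 := f'.injective (shiftFun_injective T h)
        exact congrArg (shiftFun y) h2
    -- adjacency preservation
    have hFadj : ∀ a b, (CG T).Adj (F a) (F b) ↔ (CG y).Adj a b := by
      rintro ⟨i, v⟩ ⟨j, w⟩
      rcases Fin.eq_zero_or_eq_succ i with rfl | ⟨i', rfl⟩ <;>
        rcases Fin.eq_zero_or_eq_succ j with rfl | ⟨j', rfl⟩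
      · rw [hF0, hF0, cg_adj, cg_adj]
        constructor
        · rintro ⟨-, h2⟩
          refine ⟨rfl, fun he => h2 ?_⟩
          have hvw : v = w := (sig_mk_eq y 0 v w).1 he
          rw [hvw]
        · rintro ⟨-, h2⟩
          refine ⟨rfl, fun he => h2 ?_⟩
          have hvw : v = w := hg0c ((sig_mk_eq T 0 _ _).1 he)
          rw [hvw]
      · rw [hF0, hFs, cg_adj, cg_adj]
        constructor
        · rintro ⟨h1, -⟩
          exact absurd h1.symm (Fin.succ_ne_zero _)
        · rintro ⟨h1, -⟩
          exact absurd h1.symm (Fin.succ_ne_zero _)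
      · rw [hFs, hF0, cg_adj, cg_adj]
        constructor
        · rintro ⟨h1, -⟩
          exact absurd h1 (Fin.succ_ne_zero _)
        · rintro ⟨h1, -⟩
          exact absurd h1 (Fin.succ_ne_zero _)
      · rw [hFs, hFs]
        have e1 : (CG T).Adj (shiftFun T (f' ⟨i', v⟩)) (shiftFun T (f' ⟨j', w⟩))
            ↔ (CG (fun i : Fin n => T i.succ)).Adj (f' ⟨i', v⟩) (f' ⟨j', w⟩) :=
          (shiftEmb T).map_rel_iff
        have e2 : (CG (fun i : Fin n => T i.succ)).Adj (f' ⟨i', v⟩) (f' ⟨j', w⟩)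
            ↔ (CG (fun i : Fin n => y i.succ)).Adj ⟨i', v⟩ ⟨j', w⟩ := f'.map_rel_iff
        have e3 : (CG y).Adj (shiftFun y ⟨i', v⟩) (shiftFun y ⟨j', w⟩)
            ↔ (CG (fun i : Fin n => y i.succ)).Adj ⟨i', v⟩ ⟨j', w⟩ :=
          (shiftEmb y).map_rel_iff
        rw [e1, e2]
        exact e3.symm
    -- color injectivity
    have hcmem : ∀ (i : Fin n) (v : Fin (y i.succ)), c (F ⟨i.succ, v⟩) ∈ U := by
      intro i v
      rw [hFs, hU]
      exact Finset.mem_image_of_mem _ (Finset.mem_univ (⟨i, v⟩ : Σ i : Fin n, Fin (y i.succ)))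
    have hcnmem : ∀ v : Fin (y 0), c (F ⟨0, v⟩) ∉ U := by
      intro v
      rw [hF0]
      have hmem := (g0 v).2
      simpa using (Finset.mem_filter.mp hmem).2
    have hFcol : Function.Injective (fun a => c (F a)) := by
      rintro ⟨i, v⟩ ⟨j, w⟩ h
      simp only at h
      rcases Fin.eq_zero_or_eq_succ i with rfl | ⟨i', rfl⟩ <;>
        rcases Fin.eq_zero_or_eq_succ j with rfl | ⟨j', rfl⟩
      · rw [hF0, hF0] at h
        have := hg0c (hinj0 h)
        rw [this]
      · have hm := hcmem j' w
        rw [← h] at hm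
        exact absurd hm (hcnmem v)
      · have hm := hcmem i' v
        rw [h] at hm
        exact absurd hm (hcnmem w)
      · rw [hFs, hFs] at h
        have h2 := hf' h
        exact congrArg (shiftFun y) h2
    exact ⟨⟨⟨F, hFinj⟩, fun {a b} => hFadj a b⟩, hFcol⟩



lemma sum_tail (s : ℕ) (y : Fin s → ℕ) :
    (∑ i : Fin s, ∑ j : Fin s, if i ≤ j then y j else 0)
      = ∑ i : Fin s, ((i : ℕ) + 1) * y i := by
  rw [Finset.sum_comm]
  refine Finset.sum_congr rfl ?_
  intro j _
  rw [← Finset.sum_filter]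
  rw [Finset.sum_const]
  have : (Finset.univ.filter (fun i : Fin s => i ≤ j)) = Finset.Iic j := by
    ext x; simp
  rw [this, Fin.card_Iic, smul_eq_mul]

lemma card_sigma_T (s : ℕ) (T : Fin s → ℕ) :
    Fintype.card (Σ i : Fin s, Fin (T i)) = ∑ i : Fin s, T i := by
  simp [Fintype.card_sigma]



/-- The upper bound: the disjoint union of cliques of sizes given by the tail sums
`T i = y i + y (i+1) + ⋯ + y (s-1)` arrows `H` and has `∑ (i+1) * y i` vertices. -/
lemma upper (s : ℕ) (y : Fin s → ℕ) :
    ∃ G : SimpleGraph (Fin (∑ i : Fin s, ((i : ℕ) + 1) * y i)), ArrowsR G (CG y) := by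
  set T : Fin s → ℕ := fun i => ∑ j, if i ≤ j then y j else 0 with hTdef
  have hcard : Fintype.card (Σ i : Fin s, Fin (T i))
      = ∑ i : Fin s, ((i : ℕ) + 1) * y i := by
    rw [card_sigma_T, hTdef, sum_tail s y]
  have harr : ArrowsR (CG T) (CG y) := arrows_cg s y T (fun i => le_of_eq rfl)
  exact ⟨(CG T).overFin hcard, arrowsR_of_iso ((CG T).overFinIso hcard) harr⟩

def gPot (a : ℕ) : ℕ := ∑ k ∈ Finset.range a, (k + 1)
lemma gPot_pred {a : ℕ} (h : 1 ≤ a) : gPot (a - 1) + a = gPot a := by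
  have := Finset.sum_range_succ (fun k => k + 1) (a - 1)
  have h1 : a - 1 + 1 = a := by omega
  rw [h1] at this
  rw [gPot, gPot, this]
def mcount {s : ℕ} (z : Fin s → ℕ) (t : ℕ) : ℕ :=
  (Finset.univ.filter fun i => t ≤ z i).card
def fwt {s : ℕ} (z : Fin s → ℕ) : ℕ :=
  ∑ t ∈ Finset.range (∑ i, z i), gPot (mcount z (t + 1))
lemma mcount_mono {s : ℕ} (z : Fin s → ℕ) {t t' : ℕ} (h : t ≤ t') :
    mcount z t' ≤ mcount z t := by
  apply Finset.card_le_card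
  intro i hi
  simp only [Finset.mem_filter, Finset.mem_univ, true_and] at hi ⊢
  omega

lemma mcount_eq_zero {s : ℕ} (z : Fin s → ℕ) {t : ℕ} (h : ∀ i, z i < t) :
    mcount z t = 0 := by
  rw [mcount, Finset.card_eq_zero, Finset.filter_eq_empty_iff]
  intro i _
  exact not_le.2 (h i)
lemma fwt_eq_sum {s : ℕ} (z : Fin s → ℕ) {B : ℕ} (hB : (∑ i, z i) ≤ B) :
    fwt z = ∑ t ∈ Finset.range B, gPot (mcount z (t + 1)) := by
  rw [fwt]
  apply Finset.sum_subset (Finset.range_subset_range.2 hB)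
  intro t ht hts
  simp only [Finset.mem_range, not_lt] at ht hts
  have : mcount z (t + 1) = 0 := by
    apply mcount_eq_zero
    intro i
    have : z i ≤ ∑ j, z j := Finset.single_le_sum (fun j _ => Nat.zero_le _) (Finset.mem_univ i)
    omega
  rw [this]
  rfl

section Update
variable {s : ℕ} (z : Fin s → ℕ) (i₀ : Fin s)

lemma mcount_update_ne (h1 : 1 ≤ z i₀) {t : ℕ} (ht : t ≠ z i₀) :
    mcount (Function.update z i₀ (z i₀ - 1)) t = mcount z t := by
  unfold mcount
  congr 1
  apply Finset.filter_congr
  intro i _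
  by_cases hi : i = i₀
  · subst hi
    rw [Function.update_self]
    constructor <;> intro <;> omega
  · rw [Function.update_of_ne hi]

lemma mcount_update_eq (h1 : 1 ≤ z i₀) :
    mcount (Function.update z i₀ (z i₀ - 1)) (z i₀) = mcount z (z i₀) - 1 := by
  unfold mcount
  have : (Finset.univ.filter fun i => z i₀ ≤ Function.update z i₀ (z i₀ - 1) i)
      = (Finset.univ.filter fun i => z i₀ ≤ z i).erase i₀ := by
    ext i
    simp only [Finset.mem_filter, Finset.mem_univ, true_and, Finset.mem_erase]
    by_cases hi : i = i₀
    · subst hi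
      rw [Function.update_self]
      constructor
      · intro h; omega
      · rintro ⟨h, -⟩; exact absurd rfl h
    · rw [Function.update_of_ne hi]
      tauto
  rw [this, Finset.card_erase_of_mem]
  simp [h1]

lemma mcount_self_pos (h1 : 1 ≤ z i₀) : 1 ≤ mcount z (z i₀) := by
  rw [Nat.one_le_iff_ne_zero, ← Nat.pos_iff_ne_zero]
  apply Finset.card_pos.2
  exact ⟨i₀, by simp⟩

lemma fwt_update (h1 : 1 ≤ z i₀) :
    fwt (Function.update z i₀ (z i₀ - 1)) + mcount z (z i₀) = fwt z := by
  set z' := Function.update z i₀ (z i₀ - 1) with hz'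
  set B := ∑ i, z i with hB
  have hB' : (∑ i, z' i) ≤ B := by
    rw [hB]
    apply Finset.sum_le_sum
    intro i _
    by_cases hi : i = i₀
    · subst hi; rw [hz', Function.update_self]; omega
    · rw [hz', Function.update_of_ne hi]
  have ht₀ : z i₀ - 1 ∈ Finset.range B := by
    rw [Finset.mem_range, hB]
    have : z i₀ ≤ ∑ j, z j := Finset.single_le_sum (fun j _ => Nat.zero_le _) (Finset.mem_univ i₀)
    omega
  rw [fwt_eq_sum z (le_refl B), fwt_eq_sum z' hB']
  rw [← Finset.add_sum_erase _ _ ht₀, ← Finset.add_sum_erase _ _ ht₀]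
  have hsucc : z i₀ - 1 + 1 = z i₀ := by omega
  have herased : ∀ t ∈ (Finset.range B).erase (z i₀ - 1),
      gPot (mcount z' (t + 1)) = gPot (mcount z (t + 1)) := by
    intro t ht
    have htne : t + 1 ≠ z i₀ := by
      intro h
      apply (Finset.mem_erase.1 ht).1
      omega
    rw [mcount_update_ne z i₀ h1 htne]
  rw [Finset.sum_congr rfl herased]
  rw [hsucc, mcount_update_eq z i₀ h1]
  have hm := mcount_self_pos z i₀ h1
  have := gPot_pred (a := mcount z (z i₀)) hm
  omega

end Update

lemma sum_downward {s : ℕ} (S : Finset (Fin s))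
    (hdc : ∀ i j : Fin s, i ≤ j → j ∈ S → i ∈ S) :
    ∑ i ∈ S, ((i : ℕ) + 1) = gPot S.card := by
  have hchar : ∀ i : Fin s, i ∈ S ↔ (i : ℕ) < S.card := by
    intro i
    constructor
    · intro hi
      have hsub : Finset.Iic i ⊆ S := fun j hj => hdc j i (Finset.mem_Iic.1 hj) hi
      have := Finset.card_le_card hsub
      rw [Fin.card_Iic] at this
      omega
    · intro hi
      by_contra hns
      have hsub : S ⊆ Finset.Iio i := by
        intro j hj
        rw [Finset.mem_Iio]
        by_contra hij
        exact hns (hdc i j (le_of_not_gt hij) hj)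
      have := Finset.card_le_card hsub
      rw [Fin.card_Iio] at this
      omega
  have hSeq : S = Finset.univ.filter (fun i : Fin s => (i : ℕ) < S.card) := by
    ext i
    simp only [Finset.mem_filter, Finset.mem_univ, true_and]
    exact hchar i
  conv_lhs => rw [hSeq]
  rw [Finset.sum_filter]
  rw [Fin.sum_univ_eq_sum_range (fun k => if k < S.card then k + 1 else 0) s]
  have hcs : S.card ≤ s := by
    have := Finset.card_le_card (Finset.subset_univ S)
    simpa using this
  have : (Finset.range s).filter (fun k => k < S.card) = Finset.range S.card := by
    ext k
    simp only [Finset.mem_filter, Finset.mem_range]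
    omega
  rw [← Finset.sum_filter, this, gPot]

lemma fwt_sorted {s : ℕ} (y : Fin s → ℕ)
    (hmono : ∀ i j : Fin s, i ≤ j → y j ≤ y i) :
    fwt y = ∑ i : Fin s, ((i : ℕ) + 1) * y i := by
  set B := ∑ i, y i with hB
  have hyB : ∀ i, y i ≤ B :=
    fun i => Finset.single_le_sum (fun j _ => Nat.zero_le _) (Finset.mem_univ i)
  have step1 : ∀ i : Fin s,
      ((i : ℕ) + 1) * y i = ∑ t ∈ Finset.range B, if t + 1 ≤ y i then (i : ℕ) + 1 else 0 := by
    intro i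
    have : (Finset.range B).filter (fun t => t + 1 ≤ y i) = Finset.range (y i) := by
      ext t
      simp only [Finset.mem_filter, Finset.mem_range]
      have := hyB i
      omega
    rw [← Finset.sum_filter, this, Finset.sum_const, Finset.card_range, smul_eq_mul, mul_comm]
  rw [Finset.sum_congr rfl (fun i _ => step1 i)]
  rw [Finset.sum_comm]
  rw [fwt]
  refine Finset.sum_congr rfl ?_
  intro t _
  rw [← Finset.sum_filter]
  rw [sum_downward _ (fun i j hij hjmem => by
    simp only [Finset.mem_filter, Finset.mem_univ, true_and] at hjmem ⊢
    exact le_trans hjmem (hmono i j hij))]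
  rfl


def RainbowOn {m s : ℕ} (G : SimpleGraph (Fin m)) (A : Finset (Fin m)) (c : Fin m → ℕ)
    (z : Fin s → ℕ) : Prop :=
  ∃ W : Fin s → Finset (Fin m),
    (∀ i, W i ⊆ A) ∧
    (∀ i, (W i).card = z i) ∧
    (∀ i, ∀ u ∈ W i, ∀ v ∈ W i, u ≠ v → G.Adj u v) ∧
    (∀ i j, i ≠ j → ∀ u ∈ W i, ∀ v ∈ W j, ¬ G.Adj u v ∧ u ≠ v) ∧
    (∀ i j, ∀ u ∈ W i, ∀ v ∈ W j, c u = c v → i = j ∧ u = v)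

def ArrowsOn {m s : ℕ} (G : SimpleGraph (Fin m)) (A : Finset (Fin m))
    (Z : Set (Fin s → ℕ)) : Prop :=
  ∀ c : Fin m → ℕ, (∀ u ∈ A, ∀ v ∈ A, G.Adj u v → c u ≠ c v) →
    ∃ z ∈ Z, RainbowOn G A c z

def IndepOn {m : ℕ} (G : SimpleGraph (Fin m)) (S : Finset (Fin m)) : Prop :=
  ∀ u ∈ S, ∀ v ∈ S, ¬ G.Adj u v

lemma arrowsOn_empty {m s : ℕ} (G : SimpleGraph (Fin m)) (Z : Set (Fin s → ℕ))
    (harr : ArrowsOn G ∅ Z) : ∃ z ∈ Z, fwt z = 0 := by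
  obtain ⟨z, hzZ, W, hWA, hWcard, -, -, -⟩ :=
    harr (fun _ => 0) (by intro u hu; simp at hu)
  refine ⟨z, hzZ, ?_⟩
  have hz0 : ∀ i, z i = 0 := by
    intro i
    rw [← hWcard i, Finset.card_eq_zero, ← Finset.subset_empty]
    exact hWA i
  have hsum : (∑ i, z i) = 0 := Finset.sum_eq_zero (fun i _ => hz0 i)
  rw [fwt, hsum, Finset.range_zero, Finset.sum_empty]

lemma arrowsOn_bound {m s : ℕ} (G : SimpleGraph (Fin m)) :
    ∀ (n : ℕ) (A : Finset (Fin m)), A.card ≤ n → ∀ Z : Set (Fin s → ℕ),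
      ArrowsOn G A Z → ∃ z ∈ Z, fwt z ≤ A.card := by
  intro n
  induction n with
  | zero =>
    intro A hA Z harr
    rw [Nat.le_zero, Finset.card_eq_zero] at hA
    subst hA
    obtain ⟨z, hz, h0⟩ := arrowsOn_empty G Z harr
    exact ⟨z, hz, le_of_eq h0⟩
  | succ n ih =>
    intro A hA Z harr
    rcases A.eq_empty_or_nonempty with rfl | ⟨a, haA⟩
    · obtain ⟨z, hz, h0⟩ := arrowsOn_empty G Z harr
      exact ⟨z, hz, by omega⟩
    classical
    -- a maximum independent subset of A
    have hS : (A.powerset.filter (fun S => IndepOn G S)).Nonempty :=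
      ⟨∅, Finset.mem_filter.2 ⟨Finset.empty_mem_powerset _, fun u hu => by simp at hu⟩⟩
    obtain ⟨I, hImem, hImax'⟩ := Finset.exists_max_image _ Finset.card hS
    rw [Finset.mem_filter, Finset.mem_powerset] at hImem
    obtain ⟨hIA, hIind⟩ := hImem
    have hImax : ∀ S : Finset (Fin m), S ⊆ A → IndepOn G S → S.card ≤ I.card := by
      intro S hSA hSind
      exact hImax' S (by rw [Finset.mem_filter, Finset.mem_powerset]; exact ⟨hSA, hSind⟩)
    have hα1 : 1 ≤ I.card := by
      have h1 : ({a} : Finset (Fin m)).card ≤ I.card := by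
        apply hImax
        · exact Finset.singleton_subset_iff.2 haA
        · intro u hu v hv
          rw [Finset.mem_singleton] at hu hv
          subst hu; subst hv
          exact G.irrefl
      simpa using h1
    have hIne : I.Nonempty := Finset.card_pos.1 hα1
    set α := I.card with hαdef
    set A' := A \ I with hA'def
    have hA'card : A'.card = A.card - α := Finset.card_sdiff_of_subset hIA
    have hαA : α ≤ A.card := Finset.card_le_card hIA
    set Z' : Set (Fin s → ℕ) := Z ∪ {z' | ∃ z ∈ Z, ∃ i₀ : Fin s,
      1 ≤ z i₀ ∧ mcount z 1 ≤ α ∧ z' = Function.update z i₀ (z i₀ - 1)} with hZ'def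
    have harr' : ArrowsOn G A' Z' := by
      intro c' hc'
      set ν := ((A'.image c').sup id) + 1 with hνdef
      have hν : ∀ u ∈ A', c' u < ν := by
        intro u hu
        have : c' u ≤ (A'.image c').sup id :=
          Finset.le_sup (f := id) (Finset.mem_image_of_mem c' hu)
        omega
      set c : Fin m → ℕ := fun v => if v ∈ I then ν else c' v with hcdef
      have hcI : ∀ v ∈ I, c v = ν := by intro v hv; simp [hcdef, hv]
      have hcA' : ∀ v ∈ A', c v = c' v := by
        intro v hv
        have : v ∉ I := (Finset.mem_sdiff.1 hv).2
        simp [hcdef, this]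
      have hproper : ∀ u ∈ A, ∀ v ∈ A, G.Adj u v → c u ≠ c v := by
        intro u hu v hv hadj
        by_cases huI : u ∈ I <;> by_cases hvI : v ∈ I
        · exact absurd hadj (hIind u huI v hvI)
        · have hvA' : v ∈ A' := Finset.mem_sdiff.2 ⟨hv, hvI⟩
          rw [hcI u huI, hcA' v hvA']
          exact fun h => absurd h.symm (Nat.ne_of_lt (hν v hvA'))
        · have huA' : u ∈ A' := Finset.mem_sdiff.2 ⟨hu, huI⟩
          rw [hcI v hvI, hcA' u huA']
          exact Nat.ne_of_lt (hν u huA')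
        · have huA' : u ∈ A' := Finset.mem_sdiff.2 ⟨hu, huI⟩
          have hvA' : v ∈ A' := Finset.mem_sdiff.2 ⟨hv, hvI⟩
          rw [hcA' u huA', hcA' v hvA']
          exact hc' u huA' v hvA' hadj
      obtain ⟨z, hzZ, W, hWA, hWcard, hWcl, hWcr, hWrb⟩ := harr c hproper
      by_cases hex : ∃ p : Fin s × Fin m, p.2 ∈ W p.1 ∧ p.2 ∈ I
      · obtain ⟨⟨i₀, x⟩, hxW, hxI⟩ := hex
        have havoid : ∀ j, ∀ u ∈ W j, u ∈ I → j = i₀ ∧ u = x := by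
          intro j u huW huI
          have hcu : c u = c x := by rw [hcI u huI, hcI x hxI]
          exact hWrb j i₀ u huW x hxW hcu
        have hz1 : 1 ≤ z i₀ := by
          rw [← hWcard i₀]
          exact Finset.card_pos.2 ⟨x, hxW⟩
        have hlen : mcount z 1 ≤ α := by
          set pick : Fin s → Fin m := fun i =>
            if h : (W i).Nonempty then h.choose else x with hpick
          have hpickmem : ∀ i : Fin s, 1 ≤ z i → pick i ∈ W i := by
            intro i hi
            have hne : (W i).Nonempty := Finset.card_pos.1 (by rw [hWcard i]; exact hi)
            simp only [hpick, dif_pos hne]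
            exact hne.choose_spec
          have hpickinj : Set.InjOn pick (Finset.univ.filter (fun i : Fin s => 1 ≤ z i)) := by
            intro i hi j hj hij
            simp only [Finset.coe_filter, Set.mem_setOf_eq, Finset.mem_univ, true_and] at hi hj
            by_contra hne
            have := (hWcr i j hne (pick i) (hpickmem i hi) (pick j) (hpickmem j hj)).2
            exact this hij
          set S := (Finset.univ.filter (fun i : Fin s => 1 ≤ z i)).image pick with hSdef
          have hSA : S ⊆ A := by
            intro u hu
            rw [hSdef, Finset.mem_image] at hu
            obtain ⟨i, hi, rfl⟩ := hu
            simp only [Finset.mem_filter, Finset.mem_univ, true_and] at hi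
            exact hWA i (hpickmem i hi)
          have hSind : IndepOn G S := by
            intro u hu v hv
            rw [hSdef, Finset.mem_image] at hu hv
            obtain ⟨i, hi, rfl⟩ := hu
            obtain ⟨j, hj, rfl⟩ := hv
            simp only [Finset.mem_filter, Finset.mem_univ, true_and] at hi hj
            by_cases hij : i = j
            · subst hij
              exact G.irrefl
            · exact (hWcr i j hij (pick i) (hpickmem i hi) (pick j) (hpickmem j hj)).1
          have hScard : S.card = mcount z 1 := by
            rw [hSdef, Finset.card_image_of_injOn hpickinj, mcount]
          rw [← hScard]
          exact hImax S hSA hSind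
        -- shrink the copy: remove `x` from part `i₀`
        set z' : Fin s → ℕ := Function.update z i₀ (z i₀ - 1) with hz'def
        set W' : Fin s → Finset (Fin m) := Function.update W i₀ ((W i₀).erase x) with hW'def
        have hW'sub : ∀ i, W' i ⊆ W i := by
          intro i
          by_cases hi : i = i₀
          · subst hi
            rw [hW'def, Function.update_self]
            exact Finset.erase_subset x (W i)
          · rw [hW'def, Function.update_of_ne hi]
        have hW'A' : ∀ i, W' i ⊆ A' := by
          intro i u hu
          have huW : u ∈ W i := hW'sub i hu
          refine Finset.mem_sdiff.2 ⟨hWA i huW, fun huI => ?_⟩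
          obtain ⟨hji, rfl⟩ := havoid i u huW huI
          subst hji
          rw [hW'def, Function.update_self] at hu
          exact (Finset.mem_erase.1 hu).1 rfl
        refine ⟨z', Or.inr ⟨z, hzZ, i₀, hz1, hlen, hz'def⟩, W', hW'A', ?_, ?_, ?_, ?_⟩
        · intro i
          by_cases hi : i = i₀
          · subst hi
            rw [hW'def, hz'def, Function.update_self, Function.update_self,
              Finset.card_erase_of_mem hxW, hWcard]
          · rw [hW'def, hz'def, Function.update_of_ne hi, Function.update_of_ne hi, hWcard]
        · intro i u hu v hv huv
          exact hWcl i u (hW'sub i hu) v (hW'sub i hv) huv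
        · intro i j hij u hu v hv
          exact hWcr i j hij u (hW'sub i hu) v (hW'sub j hv)
        · intro i j u hu v hv hcuv
          apply hWrb i j u (hW'sub i hu) v (hW'sub j hv)
          rw [hcA' u (hW'A' i hu), hcA' v (hW'A' j hv)]
          exact hcuv
      · push_neg at hex
        refine ⟨z, Or.inl hzZ, W, ?_, hWcard, hWcl, hWcr, ?_⟩
        · intro i
          intro u hu
          refine Finset.mem_sdiff.2 ⟨hWA i hu, fun huI => hex (i, u) hu huI⟩
        · intro i j u hu v hv hcuv
          have hui : u ∉ I := fun h => hex (i, u) hu h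
          have hvi : v ∉ I := fun h => hex (j, v) hv h
          apply hWrb i j u hu v hv
          rw [hcdef]
          simp only [if_neg hui, if_neg hvi]
          exact hcuv
    have hA'le : A'.card ≤ n := by omega
    obtain ⟨z'', hz''Z', hz''le⟩ := ih A' hA'le Z' harr'
    rw [hZ'def, Set.mem_union] at hz''Z'
    rcases hz''Z' with h | h
    · exact ⟨z'', h, by omega⟩
    · obtain ⟨z, hzZ, i₀, hz1, hlen, rfl⟩ := h
      refine ⟨z, hzZ, ?_⟩
      have hupd := fwt_update z i₀ hz1
      have hmono' := mcount_mono z hz1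
      omega


lemma arrowsOn_univ {m s : ℕ} (G : SimpleGraph (Fin m)) (y : Fin s → ℕ)
    (hG : ArrowsR G (CG y)) : ArrowsOn G Finset.univ {y} := by
  intro c hc
  obtain ⟨f, hf⟩ := hG c (fun u v huv => hc u (Finset.mem_univ u) v (Finset.mem_univ v) huv)
  refine ⟨y, rfl, fun i => Finset.univ.image (fun v : Fin (y i) => f ⟨i, v⟩), ?_, ?_, ?_, ?_, ?_⟩
  · exact fun i => Finset.subset_univ _
  · intro i
    rw [Finset.card_image_of_injective _ (fun a b hab => ?_), Finset.card_univ, Fintype.card_fin]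
    have := f.injective hab
    simpa using this
  · intro i u hu v hv huv
    simp only [Finset.mem_image, Finset.mem_univ, true_and] at hu hv
    obtain ⟨a, rfl⟩ := hu
    obtain ⟨b, rfl⟩ := hv
    refine f.map_rel_iff.2 ((cg_adj y _ _).2 ⟨rfl, fun he => huv (congrArg f he)⟩)
  · intro i j hij u hu v hv
    simp only [Finset.mem_image, Finset.mem_univ, true_and] at hu hv
    obtain ⟨a, rfl⟩ := hu
    obtain ⟨b, rfl⟩ := hv
    constructor
    · intro hadj
      exact hij ((cg_adj y _ _).1 (f.map_rel_iff.1 hadj)).1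
    · intro he
      exact hij (congrArg Sigma.fst (f.injective he))
  · intro i j u hu v hv hcuv
    simp only [Finset.mem_image, Finset.mem_univ, true_and] at hu hv
    obtain ⟨a, rfl⟩ := hu
    obtain ⟨b, rfl⟩ := hv
    have := hf hcuv
    exact ⟨congrArg Sigma.fst this, congrArg f this⟩


lemma lower_bound {m s : ℕ} (G : SimpleGraph (Fin m)) (y : Fin s → ℕ)
    (hmono : ∀ i j : Fin s, i ≤ j → y j ≤ y i) (hG : ArrowsR G (CG y)) :
    (∑ i : Fin s, ((i : ℕ) + 1) * y i) ≤ m := by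
  obtain ⟨z, hz, hle⟩ := arrowsOn_bound G (Finset.univ : Finset (Fin m)).card Finset.univ
    (le_refl _) {y} (arrowsOn_univ G y hG)
  rw [Set.mem_singleton_iff] at hz
  subst hz
  rw [fwt_sorted z hmono] at hle
  simpa using hle

end Stmt12

/-- For `H` the disjoint union of `s` cliques of sizes `y 0 ≥ y 1 ≥ … ≥ y (s-1) ≥ 1`
(the complement of the complete multipartite graph with these class sizes):
`ρ(H) = Σ_{i=1}^{s} i·y_i`. -/
theorem stmt12 (s : ℕ) (y : Fin s → ℕ) (hy1 : ∀ i, 1 ≤ y i)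
    (hmono : ∀ i j : Fin s, i ≤ j → y j ≤ y i) :
    rho (SimpleGraph.completeMultipartiteGraph fun i : Fin s => Fin (y i))ᶜ =
      ∑ i : Fin s, ((i : ℕ) + 1) * y i := by
  obtain ⟨G, hG⟩ := Stmt12.upper s y
  apply le_antisymm
  · exact Nat.sInf_le ⟨G, hG⟩
  · refine le_csInf ⟨_, G, hG⟩ ?_
    rintro m ⟨G', hG'⟩
    exact Stmt12.lower_bound G' y hmono hG'
end
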